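/- arXiv:1709.03740 — 9 statements merged into one kernel-verified Lean document; each statement's English description precedes it below -/
import Mathlib

section
/- For every n ≥ 2, the algebra ℰ_n(u) is finite dimensional as a vector space over K = ℂ(u). -/
noncomputable section

open FreeAlgebra

/-- The base field `K = ℂ(u)`, the field of rational functions over `ℂ`. -/
abbrev K : Type := RatFunc ℂ

/-- The distinguished element `u` of `K = ℂ(u)`. -/
def u : K := RatFunc.X

/-- Generators of the algebra `ℰ_n(u)`: `T i` and `E i` for `i` ranging over `n - 1` indices. -/
inductive Gen (n : ℕ) : Type
  | T : Fin (n - 1) → Gen n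
  | E : Fin (n - 1) → Gen n

/-- The free `K`-algebra on the generators. -/
abbrev FA (n : ℕ) : Type := FreeAlgebra K (Gen n)

def fT {n : ℕ} (i : Fin (n - 1)) : FA n := ι K (Gen.T i)
def fE {n : ℕ} (i : Fin (n - 1)) : FA n := ι K (Gen.E i)

/-- The defining relations of `ℰ_n(u)`. -/
inductive EnRel (n : ℕ) : FA n → FA n → Prop
  | TTfar {i j : Fin (n - 1)} : 1 < Nat.dist i j →
      EnRel n (fT i * fT j) (fT j * fT i)
  | braid {i j : Fin (n - 1)} : Nat.dist i j = 1 →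
      EnRel n (fT i * fT j * fT i) (fT j * fT i * fT j)
  | Eidem (i : Fin (n - 1)) : EnRel n (fE i * fE i) (fE i)
  | EE (i j : Fin (n - 1)) : EnRel n (fE i * fE j) (fE j * fE i)
  | ET (i : Fin (n - 1)) : EnRel n (fE i * fT i) (fT i * fE i)
  | ETfar {i j : Fin (n - 1)} : 1 < Nat.dist i j →
      EnRel n (fE i * fT j) (fT j * fE i)
  | ETT {i j : Fin (n - 1)} : Nat.dist i j = 1 →
      EnRel n (fE j * (fT i * fT j)) (fT i * fT j * fE i)
  | EET {i j : Fin (n - 1)} : Nat.dist i j = 1 →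
      EnRel n (fE i * fE j * fT j) (fE i * fT j * fE i)
  | ETE {i j : Fin (n - 1)} : Nat.dist i j = 1 →
      EnRel n (fE i * fT j * fE i) (fT j * (fE i * fE j))
  | Tsq (i : Fin (n - 1)) :
      EnRel n (fT i * fT i) (1 + (u⁻¹ - 1) • (fE i * (1 - fT i)))

/-- The algebra `ℰ_n(u)`, as a quotient of the free algebra by the defining relations. -/
abbrev En (n : ℕ) : Type := RingQuot (EnRel n)

/-- The generator `T i` of `ℰ_n(u)`. -/
def T {n : ℕ} (i : Fin (n - 1)) : En n := RingQuot.mkAlgHom K (EnRel n) (fT i)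

/-- The generator `E i` of `ℰ_n(u)`. -/
def E {n : ℕ} (i : Fin (n - 1)) : En n := RingQuot.mkAlgHom K (EnRel n) (fE i)


namespace EnAux

variable {n : ℕ}

lemma u_ne : (u : K) ≠ 0 := RatFunc.X_ne_zero

local notation "ε" => (u⁻¹ - 1 : K)

lemma rel {a b : FA n} (h : EnRel n a b) :
    RingQuot.mkAlgHom K (EnRel n) a = RingQuot.mkAlgHom K (EnRel n) b :=
  RingQuot.mkAlgHom_rel K h

lemma TT_far {i j : Fin (n-1)} (h : 1 < Nat.dist i j) : T i * T j = T j * T i := by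
  simpa [T, map_mul] using rel (EnRel.TTfar h)

lemma braid {i j : Fin (n-1)} (h : Nat.dist i j = 1) :
    T i * (T j * T i) = T j * (T i * T j) := by
  simpa [T, map_mul, mul_assoc] using rel (EnRel.braid h)

lemma Eidem (i : Fin (n-1)) : E i * E i = E i := by
  simpa [E, map_mul] using rel (EnRel.Eidem i)

lemma EE (i j : Fin (n-1)) : E i * E j = E j * E i := by
  simpa [E, map_mul] using rel (EnRel.EE i j)

lemma ET (i : Fin (n-1)) : E i * T i = T i * E i := by
  simpa [E, T, map_mul] using rel (EnRel.ET i)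

lemma ET_far {i j : Fin (n-1)} (h : 1 < Nat.dist i j) : E i * T j = T j * E i := by
  simpa [E, T, map_mul] using rel (EnRel.ETfar h)

lemma ETT {i j : Fin (n-1)} (h : Nat.dist i j = 1) :
    E j * (T i * T j) = T i * (T j * E i) := by
  simpa [E, T, map_mul, mul_assoc] using rel (EnRel.ETT h)

lemma EET {i j : Fin (n-1)} (h : Nat.dist i j = 1) :
    E i * (E j * T j) = E i * (T j * E i) := by
  simpa [E, T, map_mul, mul_assoc] using rel (EnRel.EET h)

lemma ETE {i j : Fin (n-1)} (h : Nat.dist i j = 1) :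
    E i * (T j * E i) = T j * (E i * E j) := by
  simpa [E, T, map_mul, mul_assoc] using rel (EnRel.ETE h)

lemma Tsq (i : Fin (n-1)) : T i * T i = 1 + ε • E i - ε • (E i * T i) := by
  have := rel (n := n) (EnRel.Tsq i)
  simp only [map_mul, map_add, map_one, map_smul, map_sub] at this
  rw [show RingQuot.mkAlgHom K (EnRel n) (fT i) = T i from rfl,
      show RingQuot.mkAlgHom K (EnRel n) (fE i) = E i from rfl] at this
  rw [this]; rw [mul_sub, mul_one, smul_sub]; abel

end EnAux

namespace EnAux

variable {n : ℕ}

local notation "ε" => (u⁻¹ - 1 : K)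

section SingleIndex

variable (i : Fin (n-1))

lemma TE_x (x : En n) : T i * (E i * x) = E i * (T i * x) := by
  simpa only [mul_assoc] using congrArg (· * x) (ET i).symm

lemma EE_same_x (x : En n) : E i * (E i * x) = E i * x := by
  simpa only [mul_assoc] using congrArg (· * x) (Eidem i)

lemma TT_x (x : En n) : T i * (T i * x) = x + ε • (E i * x) - ε • (E i * (T i * x)) := by
  have := congrArg (· * x) (Tsq i)
  simpa only [mul_assoc, add_mul, sub_mul, smul_mul_assoc, one_mul] using this

/-- The inverse of `T i`. -/
def σ (i : Fin (n-1)) : En n := T i + (1-u) • E i - (1-u) • (E i * T i)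

lemma sigma_mem_aux : σ i = T i + (1-u) • E i - (1-u) • (E i * T i) := rfl

lemma collect_aux {M : Type} [AddCommGroup M] [Module K M] (z x y : M) {a b : K}
    (hab : a = b + b * a) :
    z + a • x - a • y + b • y - (b • x + (b*a) • x - (b*a) • y) = z := by
  have hx : a • x = b • x + (b*a) • x := by rw [← add_smul, ← hab]
  have hy : a • y = b • y + (b*a) • y := by rw [← add_smul, ← hab]
  rw [hx, hy]; abel

lemma hab_aux : (u⁻¹ - 1 : K) = (1-u) + (1-u) * (u⁻¹ - 1) := by
  field_simp [u_ne]
  ring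

lemma T_mul_σ : T i * σ i = 1 := by
  rw [σ, mul_sub, mul_add, mul_smul_comm, mul_smul_comm, TE_x i (T i), (ET i).symm, Tsq i]
  rw [mul_sub, mul_add, mul_one, mul_smul_comm, mul_smul_comm, Eidem i, EE_same_x i (T i)]
  rw [smul_sub, smul_add, smul_smul, smul_smul]
  exact collect_aux 1 (E i) (E i * T i) hab_aux

lemma σ_mul_T : σ i * T i = 1 := by
  rw [σ, sub_mul, add_mul, smul_mul_assoc, smul_mul_assoc, mul_assoc (E i) (T i) (T i), Tsq i]
  rw [mul_sub, mul_add, mul_one, mul_smul_comm, mul_smul_comm, Eidem i, EE_same_x i (T i)]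
  rw [smul_sub, smul_add, smul_smul, smul_smul]
  exact collect_aux 1 (E i) (E i * T i) hab_aux

lemma Tσ_x (x : En n) : T i * (σ i * x) = x := by
  rw [← mul_assoc, T_mul_σ, one_mul]

end SingleIndex

section Adjacent

variable {i j : Fin (n-1)} (hd : (i : ℕ) + 1 = (j : ℕ))
include hd

lemma dij : Nat.dist (i : ℕ) (j : ℕ) = 1 := by simp [Nat.dist]; omega

lemma dji : Nat.dist (j : ℕ) (i : ℕ) = 1 := by simp [Nat.dist]; omega

lemma braid_x (x : En n) : T j * (T i * (T j * x)) = T i * (T j * (T i * x)) := by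
  simpa only [mul_assoc] using congrArg (· * x) (braid (dji hd))

lemma ETTa_x (x : En n) : E j * (T i * (T j * x)) = T i * (T j * (E i * x)) := by
  simpa only [mul_assoc] using congrArg (· * x) (ETT (dij hd))

lemma ETTb_x (x : En n) : E i * (T j * (T i * x)) = T j * (T i * (E j * x)) := by
  simpa only [mul_assoc] using congrArg (· * x) (ETT (dji hd))

lemma d6_x (x : En n) : T j * (T i * (E j * x)) = E i * (T j * (T i * x)) :=
  (ETTb_x hd x).symm

lemma ETEa_x (x : En n) : E i * (T j * (E i * x)) = T j * (E i * (E j * x)) := by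
  simpa only [mul_assoc] using congrArg (· * x) (ETE (dij hd))

lemma ETEb_x (x : En n) : E j * (T i * (E j * x)) = T i * (E j * (E i * x)) := by
  simpa only [mul_assoc] using congrArg (· * x) (ETE (dji hd))

lemma EETa_x (x : En n) : E i * (E j * (T j * x)) = E i * (T j * (E i * x)) := by
  simpa only [mul_assoc] using congrArg (· * x) (EET (dij hd))

lemma EETb_x (x : En n) : E j * (E i * (T i * x)) = E j * (T i * (E j * x)) := by
  simpa only [mul_assoc] using congrArg (· * x) (EET (dji hd))

lemma r9_x (x : En n) : E i * (E j * (T j * x)) = T j * (E i * (E j * x)) := by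
  rw [EETa_x hd, ETEa_x hd]

omit hd in
lemma EE_x (x : En n) : E i * (E j * x) = E j * (E i * x) := by
  simpa only [mul_assoc] using congrArg (· * x) (EE i j)

lemma eT_expand (x : En n) : E i * (T j * x) = T j * (T i * (E j * (σ i * x))) := by
  have h := ETTb_x hd (σ i * x)
  rwa [Tσ_x] at h

end Adjacent

end EnAux

namespace EnAux

variable {n : ℕ}

local notation "ε" => (u⁻¹ - 1 : K)

/-- Generators of the subalgebra tower. -/
def Agen (n m : ℕ) : Set (En n) :=
  {x | ∃ i : Fin (n-1), (i : ℕ) < m ∧ (x = T i ∨ x = E i)}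

/-- The subalgebra generated by the generators of index `< m`. -/
def Asa (n m : ℕ) : Subalgebra K (En n) := Algebra.adjoin K (Agen n m)

lemma Agen_mono {m m' : ℕ} (h : m ≤ m') : Agen n m ⊆ Agen n m' := by
  rintro x ⟨i, hi, hx⟩; exact ⟨i, lt_of_lt_of_le hi h, hx⟩

lemma Asa_mono {m m' : ℕ} (h : m ≤ m') : Asa n m ≤ Asa n m' :=
  Algebra.adjoin_mono (Agen_mono h)

lemma Agen_zero : Agen n 0 = ∅ := by
  ext x; simp [Agen]

lemma commute_T_A {m : ℕ} {k : Fin (n-1)} (hk : m + 1 ≤ (k : ℕ)) {x : En n}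
    (hx : x ∈ Asa n m) : Commute (T k) x := by
  induction hx using Algebra.adjoin_induction with
  | mem y hy =>
    obtain ⟨i, him, hy⟩ := hy
    have hdist : 1 < Nat.dist (k : ℕ) (i : ℕ) := by simp [Nat.dist]; omega
    rcases hy with rfl | rfl
    · exact TT_far hdist
    · have hdist' : 1 < Nat.dist (i : ℕ) (k : ℕ) := by rwa [Nat.dist_comm]
      exact (ET_far hdist').symm
  | algebraMap r => exact (Algebra.commute_algebraMap_left r (T k)).symm
  | add a b _ _ ha hb => exact ha.add_right hb
  | mul a b _ _ ha hb => exact ha.mul_right hb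

lemma commute_E_A {m : ℕ} {k : Fin (n-1)} (hk : m + 1 ≤ (k : ℕ)) {x : En n}
    (hx : x ∈ Asa n m) : Commute (E k) x := by
  induction hx using Algebra.adjoin_induction with
  | mem y hy =>
    obtain ⟨i, him, hy⟩ := hy
    have hdist : 1 < Nat.dist (k : ℕ) (i : ℕ) := by simp [Nat.dist]; omega
    rcases hy with rfl | rfl
    · exact ET_far hdist
    · exact (EE i k).symm
  | algebraMap r => exact (Algebra.commute_algebraMap_left r (E k)).symm
  | add a b _ _ ha hb => exact ha.add_right hb
  | mul a b _ _ ha hb => exact ha.mul_right hb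

/-- The span of `1, T j, E j, E j * T j`. -/
def Bsub (j : Fin (n-1)) : Submodule K (En n) :=
  Submodule.span K {(1 : En n), T j, E j, E j * T j}

lemma one_mem_B (j : Fin (n-1)) : (1 : En n) ∈ Bsub j :=
  Submodule.subset_span (by simp)

lemma T_mem_B (j : Fin (n-1)) : T j ∈ Bsub j :=
  Submodule.subset_span (by simp)

lemma E_mem_B (j : Fin (n-1)) : E j ∈ Bsub j :=
  Submodule.subset_span (by simp)

lemma ET_mem_B (j : Fin (n-1)) : E j * T j ∈ Bsub j :=
  Submodule.subset_span (by simp)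

lemma B_mul_T {j : Fin (n-1)} {x : En n} (hx : x ∈ Bsub j) : T j * x ∈ Bsub j := by
  induction hx using Submodule.span_induction with
  | mem y hy =>
    rcases hy with rfl | rfl | rfl | rfl
    · simpa using T_mem_B j
    · rw [Tsq j]
      exact sub_mem (add_mem (one_mem_B j) (Submodule.smul_mem _ _ (E_mem_B j)))
        (Submodule.smul_mem _ _ (ET_mem_B j))
    · rw [← ET j]; exact ET_mem_B j
    · rw [TE_x j (T j), Tsq j, mul_sub, mul_add, mul_one, mul_smul_comm, mul_smul_comm,
        Eidem j, EE_same_x j (T j)]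
      exact sub_mem (add_mem (E_mem_B j) (Submodule.smul_mem _ _ (E_mem_B j)))
        (Submodule.smul_mem _ _ (ET_mem_B j))
  | zero => simpa using Submodule.zero_mem _
  | add a b _ _ ha hb => rw [mul_add]; exact add_mem ha hb
  | smul c a _ ha => rw [mul_smul_comm]; exact Submodule.smul_mem _ _ ha

lemma B_mul_E {j : Fin (n-1)} {x : En n} (hx : x ∈ Bsub j) : E j * x ∈ Bsub j := by
  induction hx using Submodule.span_induction with
  | mem y hy =>
    rcases hy with rfl | rfl | rfl | rfl
    · simpa using E_mem_B j
    · exact ET_mem_B j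
    · rw [Eidem j]; exact E_mem_B j
    · rw [EE_same_x j (T j)]; exact ET_mem_B j
  | zero => simpa using Submodule.zero_mem _
  | add a b _ _ ha hb => rw [mul_add]; exact add_mem ha hb
  | smul c a _ ha => rw [mul_smul_comm]; exact Submodule.smul_mem _ _ ha

lemma commute_B {m : ℕ} {j : Fin (n-1)} (hj : m + 1 ≤ (j : ℕ)) {q x : En n}
    (hq : q ∈ Asa n m) (hx : x ∈ Bsub j) : Commute q x := by
  induction hx using Submodule.span_induction with
  | mem y hy =>
    rcases hy with rfl | rfl | rfl | rfl
    · exact Commute.one_right q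
    · exact (commute_T_A hj hq).symm
    · exact (commute_E_A hj hq).symm
    · exact ((commute_E_A hj hq).symm).mul_right ((commute_T_A hj hq).symm)
  | zero => exact Commute.zero_right q
  | add a b _ _ ha hb => exact ha.add_right hb
  | smul c a _ ha => exact ha.smul_right c

section V

variable (A : Subalgebra K (En n)) (j : Fin (n-1))

/-- The candidate submodule `A · B · A`. -/
def VV : Submodule K (En n) :=
  Subalgebra.toSubmodule A * Bsub j * Subalgebra.toSubmodule A

variable {A j}

lemma memV {a x b : En n} (ha : a ∈ A) (hx : x ∈ Bsub j) (hb : b ∈ A) :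
    a * (x * b) ∈ VV A j := by
  rw [← mul_assoc]
  exact Submodule.mul_mem_mul (Submodule.mul_mem_mul ha hx) hb

lemma memVB {x : En n} (hx : x ∈ Bsub j) : x ∈ VV A j := by
  simpa using memV (one_mem A) hx (one_mem A)

lemma memV0 {x b : En n} (hx : x ∈ Bsub j) (hb : b ∈ A) : x * b ∈ VV A j := by
  simpa using memV (one_mem A) hx hb

lemma memV2 {a x : En n} (ha : a ∈ A) (hx : x ∈ Bsub j) : a * x ∈ VV A j := by
  simpa using memV ha hx (one_mem A)

lemma sand {a z b : En n} (ha : a ∈ A) (hz : z ∈ VV A j) (hb : b ∈ A) :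
    a * (z * b) ∈ VV A j := by
  refine Submodule.mul_induction_on hz (fun w hw c hc => ?_) (fun u v hu hv => ?_)
  · refine Submodule.mul_induction_on hw (fun a' ha' x hx => ?_) (fun u v hu hv => ?_)
    · rw [show a * (a' * x * c * b) = (a * a') * (x * (c * b)) by simp only [mul_assoc]]
      exact memV (mul_mem ha ha') hx (mul_mem hc hb)
    · rw [add_mul, add_mul, mul_add]; exact add_mem hu hv
  · rw [add_mul, mul_add]; exact add_mem hu hv

end V

end EnAux

namespace EnAux

variable {n : ℕ}

local notation "ε" => (u⁻¹ - 1 : K)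

section Core

variable {i j : Fin (n-1)} (hd : (i : ℕ) + 1 = (j : ℕ))
variable {A : Subalgebra K (En n)} (hT : T i ∈ A) (hE : E i ∈ A)

include hT hE in
lemma σ_mem : σ i ∈ A := by
  rw [sigma_mem_aux]
  exact sub_mem (add_mem hT (A.smul_mem hE _)) (A.smul_mem (mul_mem hE hT) _)

include hd

lemma d6' : T j * (T i * E j) = E i * (T j * T i) := by
  simpa using d6_x hd 1

lemma eTexp' : E i * T j = T j * (T i * (E j * σ i)) := by
  simpa using eT_expand hd 1

lemma r9' : E i * (E j * T j) = T j * (E i * E j) := by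
  simpa using r9_x hd 1

lemma EETb' : E j * (E i * T i) = E j * (T i * E j) := by
  simpa using EETb_x hd 1

include hT hE

lemma core_T {y x : En n} (hy : y ∈ Bsub i) (hx : x ∈ Bsub j) :
    T j * (y * x) ∈ VV A j := by
  have hσ : σ i ∈ A := σ_mem hT hE
  induction hy using Submodule.span_induction with
  | zero => rw [zero_mul, mul_zero]; exact Submodule.zero_mem _
  | add a b _ _ ha hb => rw [add_mul, mul_add]; exact add_mem ha hb
  | smul c a _ ha => rw [smul_mul_assoc, mul_smul_comm]; exact Submodule.smul_mem _ _ ha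
  | mem y hy =>
    rcases hy with rfl | rfl | rfl | rfl
    · -- y = 1
      rw [one_mul]
      exact memVB (B_mul_T hx)
    · -- y = T i
      induction hx using Submodule.span_induction with
      | zero => rw [mul_zero, mul_zero]; exact Submodule.zero_mem _
      | add a b _ _ ha hb => rw [mul_add, mul_add]; exact add_mem ha hb
      | smul c a _ ha => rw [mul_smul_comm, mul_smul_comm]; exact Submodule.smul_mem _ _ ha
      | mem x hx =>
        rcases hx with rfl | rfl | rfl | rfl
        · rw [mul_one]; exact memV0 (T_mem_B j) hT
        · rw [braid (dji hd)]; exact memV hT (T_mem_B j) hT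
        · rw [d6' hd]; exact memV hE (T_mem_B j) hT
        · rw [d6_x hd (T j), braid (dji hd), ← mul_assoc (E i) (T i)]
          exact memV (mul_mem hE hT) (T_mem_B j) hT
    · -- y = E i
      induction hx using Submodule.span_induction with
      | zero => rw [mul_zero, mul_zero]; exact Submodule.zero_mem _
      | add a b _ _ ha hb => rw [mul_add, mul_add]; exact add_mem ha hb
      | smul c a _ ha => rw [mul_smul_comm, mul_smul_comm]; exact Submodule.smul_mem _ _ ha
      | mem x hx =>
        rcases hx with rfl | rfl | rfl | rfl
        · rw [mul_one]; exact memV0 (T_mem_B j) hE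
        · -- T j * (E i * T j)
          rw [eTexp' hd, TT_x j (T i * (E j * σ i))]
          have h1 : T i * (E j * σ i) ∈ VV A j := memV hT (E_mem_B j) hσ
          have h2 : E j * (T i * (E j * σ i)) ∈ VV A j := by
            rw [ETEb_x hd (σ i)]
            exact memV hT (E_mem_B j) (mul_mem hE hσ)
          have h3 : E j * (T j * (T i * (E j * σ i))) ∈ VV A j := by
            rw [← TE_x j (T i * (E j * σ i)), ETEb_x hd (σ i), d6_x hd (E i * σ i)]
            exact memV hE (T_mem_B j) (mul_mem hT (mul_mem hE hσ))
          exact sub_mem (add_mem h1 (Submodule.smul_mem _ _ h2)) (Submodule.smul_mem _ _ h3)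
        · rw [← r9' hd]; exact memV2 hE (ET_mem_B j)
        · rw [← r9_x hd (T j)]
          exact memV2 hE (B_mul_E (B_mul_T (T_mem_B j)))
    · -- y = E i * T i
      rw [ET i]
      induction hx using Submodule.span_induction with
      | zero => rw [mul_zero, mul_zero]; exact Submodule.zero_mem _
      | add a b _ _ ha hb => rw [mul_add, mul_add]; exact add_mem ha hb
      | smul c a _ ha => rw [mul_smul_comm, mul_smul_comm]; exact Submodule.smul_mem _ _ ha
      | mem x hx =>
        rcases hx with rfl | rfl | rfl | rfl
        · rw [mul_one]; exact memV0 (T_mem_B j) (mul_mem hT hE)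
        · -- T j * ((T i * E i) * T j)
          rw [mul_assoc, eTexp' hd, braid_x hd (T i * (E j * σ i)), TT_x i (E j * σ i)]
          simp only [mul_add, mul_sub, mul_smul_comm]
          have k1 : T i * (T j * (E j * σ i)) ∈ VV A j := by
            rw [show T j * (E j * σ i) = E j * T j * σ i by rw [← mul_assoc, ← ET j]]
            exact memV hT (ET_mem_B j) hσ
          have k2 : T i * (T j * (E i * (E j * σ i))) ∈ VV A j := by
            rw [EE_x (i := i) (j := j) (σ i),
              show T j * (E j * (E i * σ i)) = E j * T j * (E i * σ i) by
                rw [← mul_assoc, ← ET j]]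
            exact memV hT (ET_mem_B j) (mul_mem hE hσ)
          have k3 : T i * (T j * (E i * (T i * (E j * σ i)))) ∈ VV A j := by
            have hinner : T j * (E i * (T i * (E j * σ i))) =
                E i * (T j * (T i * (E i * σ i))) := by
              rw [← TE_x i (E j * σ i), EE_x (i := i) (j := j) (σ i), d6_x hd (E i * σ i)]
            rw [hinner, ← mul_assoc (T i) (E i)]
            exact memV (mul_mem hT hE) (T_mem_B j) (mul_mem hT (mul_mem hE hσ))
          exact sub_mem (add_mem k1 (Submodule.smul_mem _ _ k2)) (Submodule.smul_mem _ _ k3)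
        · -- T j * ((T i * E i) * E j)
          rw [mul_assoc, EE i j, d6_x hd (E i)]
          exact memV hE (T_mem_B j) (mul_mem hT hE)
        · -- T j * ((T i * E i) * (E j * T j))
          rw [mul_assoc, EE_x (i := i) (j := j) (T j), d6_x hd (E i * T j), eTexp' hd,
            braid_x hd (T i * (E j * σ i)), TT_x i (E j * σ i)]
          simp only [mul_add, mul_sub, mul_smul_comm]
          have m1 : E i * (T i * (T j * (E j * σ i))) ∈ VV A j := by
            rw [show T j * (E j * σ i) = E j * T j * σ i by rw [← mul_assoc, ← ET j],
              ← mul_assoc (E i) (T i)]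
            exact memV (mul_mem hE hT) (ET_mem_B j) hσ
          have m2 : E i * (T i * (T j * (E i * (E j * σ i)))) ∈ VV A j := by
            rw [EE_x (i := i) (j := j) (σ i),
              show T j * (E j * (E i * σ i)) = E j * T j * (E i * σ i) by
                rw [← mul_assoc, ← ET j],
              ← mul_assoc (E i) (T i)]
            exact memV (mul_mem hE hT) (ET_mem_B j) (mul_mem hE hσ)
          have m3 : E i * (T i * (T j * (E i * (T i * (E j * σ i))))) ∈ VV A j := by
            have hinner : T j * (E i * (T i * (E j * σ i))) =
                E i * (T j * (T i * (E i * σ i))) := by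
              rw [← TE_x i (E j * σ i), EE_x (i := i) (j := j) (σ i), d6_x hd (E i * σ i)]
            rw [hinner, ← TE_x i (E i * (T j * (T i * (E i * σ i)))),
              EE_same_x i (T j * (T i * (E i * σ i))), ← mul_assoc (T i) (E i)]
            exact memV (mul_mem hT hE) (T_mem_B j) (mul_mem hT (mul_mem hE hσ))
          exact sub_mem (add_mem m1 (Submodule.smul_mem _ _ m2)) (Submodule.smul_mem _ _ m3)

lemma core_E {y x : En n} (hy : y ∈ Bsub i) (hx : x ∈ Bsub j) :
    E j * (y * x) ∈ VV A j := by
  induction hy using Submodule.span_induction with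
  | zero => rw [zero_mul, mul_zero]; exact Submodule.zero_mem _
  | add a b _ _ ha hb => rw [add_mul, mul_add]; exact add_mem ha hb
  | smul c a _ ha => rw [smul_mul_assoc, mul_smul_comm]; exact Submodule.smul_mem _ _ ha
  | mem y hy =>
    rcases hy with rfl | rfl | rfl | rfl
    · rw [one_mul]
      exact memVB (B_mul_E hx)
    · -- y = T i
      induction hx using Submodule.span_induction with
      | zero => rw [mul_zero, mul_zero]; exact Submodule.zero_mem _
      | add a b _ _ ha hb => rw [mul_add, mul_add]; exact add_mem ha hb
      | smul c a _ ha => rw [mul_smul_comm, mul_smul_comm]; exact Submodule.smul_mem _ _ ha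
      | mem x hx =>
        rcases hx with rfl | rfl | rfl | rfl
        · rw [mul_one]; exact memV0 (E_mem_B j) hT
        · rw [ETT (dij hd)]; exact memV hT (T_mem_B j) hE
        · rw [ETE (dji hd)]; exact memV hT (E_mem_B j) hE
        · rw [ETEb_x hd (T j), ← EE_x (i := i) (j := j) (T j), ← mul_assoc (T i) (E i)]
          exact memV2 (mul_mem hT hE) (ET_mem_B j)
    · -- y = E i
      induction hx using Submodule.span_induction with
      | zero => rw [mul_zero, mul_zero]; exact Submodule.zero_mem _
      | add a b _ _ ha hb => rw [mul_add, mul_add]; exact add_mem ha hb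
      | smul c a _ ha => rw [mul_smul_comm, mul_smul_comm]; exact Submodule.smul_mem _ _ ha
      | mem x hx =>
        rcases hx with rfl | rfl | rfl | rfl
        · rw [mul_one, ← EE i j]; exact memV2 hE (E_mem_B j)
        · rw [← EE_x (i := i) (j := j) (T j)]; exact memV2 hE (ET_mem_B j)
        · rw [← EE_x (i := i) (j := j) (E j), Eidem j]; exact memV2 hE (E_mem_B j)
        · rw [← EE_x (i := i) (j := j) (E j * T j), EE_same_x j (T j)]; exact memV2 hE (ET_mem_B j)
    · -- y = E i * T i
      induction hx using Submodule.span_induction with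
      | zero => rw [mul_zero, mul_zero]; exact Submodule.zero_mem _
      | add a b _ _ ha hb => rw [mul_add, mul_add]; exact add_mem ha hb
      | smul c a _ ha => rw [mul_smul_comm, mul_smul_comm]; exact Submodule.smul_mem _ _ ha
      | mem x hx =>
        rcases hx with rfl | rfl | rfl | rfl
        · rw [mul_one, EETb' hd, ETE (dji hd)]
          exact memV hT (E_mem_B j) hE
        · rw [mul_assoc, EETb_x hd (T j), ETEb_x hd (T j), ← EE_x (i := i) (j := j) (T j),
            ← mul_assoc (T i) (E i)]
          exact memV2 (mul_mem hT hE) (ET_mem_B j)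
        · rw [mul_assoc, EETb_x hd (E j), Eidem j, ETE (dji hd)]
          exact memV hT (E_mem_B j) hE
        · rw [mul_assoc, EETb_x hd (E j * T j), EE_same_x j (T j), ETEb_x hd (T j),
            ← EE_x (i := i) (j := j) (T j), ← mul_assoc (T i) (E i)]
          exact memV2 (mul_mem hT hE) (ET_mem_B j)

end Core

end EnAux

namespace EnAux

variable {n : ℕ}

lemma Asa_zero : Asa n 0 = ⊥ := by
  rw [Asa, Agen_zero, Algebra.adjoin_empty]

/-- The key structure theorem for the tower of subalgebras. -/
lemma STR (m : ℕ) : ∀ (hm : m < n-1),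
    Subalgebra.toSubmodule (Asa n (m+1)) = VV (Asa n m) ⟨m, hm⟩ := by
  induction m using Nat.strong_induction_on with
  | _ m IH =>
  intro hm
  set j : Fin (n-1) := ⟨m, hm⟩ with hj
  have hTj : T j ∈ Asa n (m+1) := Algebra.subset_adjoin ⟨j, by simp [hj], Or.inl rfl⟩
  have hEj : E j ∈ Asa n (m+1) := Algebra.subset_adjoin ⟨j, by simp [hj], Or.inr rfl⟩
  apply le_antisymm
  · -- A (m+1) ≤ V
    have h1V : (1 : En n) ∈ VV (Asa n m) j := memVB (one_mem_B j)
    have CL : ∀ z ∈ Asa n (m+1), ∀ v ∈ VV (Asa n m) j, z * v ∈ VV (Asa n m) j := by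
      intro z hz
      induction hz using Algebra.adjoin_induction with
      | algebraMap r =>
        intro v hv
        rw [← Algebra.smul_def]
        exact Submodule.smul_mem _ _ hv
      | add z₁ z₂ _ _ h₁ h₂ =>
        intro v hv
        rw [add_mul]; exact add_mem (h₁ v hv) (h₂ v hv)
      | mul z₁ z₂ _ _ h₁ h₂ =>
        intro v hv
        rw [mul_assoc]; exact h₁ _ (h₂ v hv)
      | mem g hg =>
        obtain ⟨k, hk, hg⟩ := hg
        intro v hv
        by_cases hkm : (k : ℕ) < m
        · -- g belongs to the smaller algebra
          have hgA : g ∈ Asa n m := by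
            rcases hg with rfl | rfl
            · exact Algebra.subset_adjoin ⟨k, hkm, Or.inl rfl⟩
            · exact Algebra.subset_adjoin ⟨k, hkm, Or.inr rfl⟩
          simpa using sand hgA hv (one_mem _)
        · -- g is T j or E j
          have hkj : k = j := Fin.ext (by simp only [hj]; omega)
          subst hkj
          refine Submodule.mul_induction_on hv (fun w hw a₂ ha₂ => ?_)
            (fun v₁ v₂ h₁ h₂ => by rw [mul_add]; exact add_mem h₁ h₂)
          refine Submodule.mul_induction_on hw (fun a₁ ha₁ x hx => ?_)
            (fun w₁ w₂ h₁ h₂ => by rw [add_mul, mul_add]; exact add_mem h₁ h₂)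
          -- now the core: g * ((a₁ * x) * a₂)
          match m, hm, j, hj, IH, ha₁, ha₂ with
          | 0, hm, j, hj, IH, ha₁, ha₂ =>
            rw [show Asa n 0 = ⊥ from Asa_zero] at ha₁ ha₂
            obtain ⟨r₁, rfl⟩ := Algebra.mem_bot.1 ha₁
            obtain ⟨r₂, rfl⟩ := Algebra.mem_bot.1 ha₂
            have : g * ((algebraMap K (En n) r₁ * x) * algebraMap K (En n) r₂) =
                r₂ • (r₁ • (g * x)) := by
              rw [← Algebra.smul_def, ← Algebra.commutes r₂, ← Algebra.smul_def,
                mul_smul_comm, mul_smul_comm]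
            rw [this]
            refine Submodule.smul_mem _ _ (Submodule.smul_mem _ _ (memVB ?_))
            rcases hg with rfl | rfl
            · exact B_mul_T hx
            · exact B_mul_E hx
          | (k'+1), hm, j, hj, IH, ha₁, ha₂ =>
            have hk' : k' < n - 1 := by omega
            set i : Fin (n-1) := ⟨k', hk'⟩ with hi
            have hd : (i : ℕ) + 1 = (j : ℕ) := by simp [hi, hj]
            have hIH := IH k' (Nat.lt_succ_self k') hk'
            rw [hIH] at ha₁
            have hTi : T i ∈ Asa n (k'+1) := Algebra.subset_adjoin ⟨i, by simp [hi], Or.inl rfl⟩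
            have hEi : E i ∈ Asa n (k'+1) := Algebra.subset_adjoin ⟨i, by simp [hi], Or.inr rfl⟩
            have hgcomm : ∀ {p : En n}, p ∈ Asa n k' → Commute g p := by
              intro p hp
              have hkj' : k' + 1 ≤ (j : ℕ) := by omega
              rcases hg with rfl | rfl
              · exact commute_T_A hkj' hp
              · exact commute_E_A hkj' hp
            refine Submodule.mul_induction_on ha₁ (fun w' hw' q hq => ?_)
              (fun b₁ b₂ h₁ h₂ => by
                rw [add_mul, add_mul, mul_add]; exact add_mem h₁ h₂)
            refine Submodule.mul_induction_on hw' (fun p hp y hy => ?_)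
              (fun b₁ b₂ h₁ h₂ => by
                rw [add_mul, add_mul, add_mul, mul_add]; exact add_mem h₁ h₂)
            -- g * ((((p * y) * q) * x) * a₂)
            have hcq : Commute q x := commute_B (by omega) hq hx
            have hcp : Commute g p := hgcomm hp
            have key : g * (p * y * q * x * a₂) = p * ((g * (y * x)) * (q * a₂)) := by
              calc g * (p * y * q * x * a₂)
                  = g * (p * (y * (q * (x * a₂)))) := by simp only [mul_assoc]
                _ = g * (p * (y * (x * (q * a₂)))) := by
                    rw [← mul_assoc q x a₂, hcq.eq, mul_assoc]
                _ = p * (g * (y * (x * (q * a₂)))) := by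
                    rw [← mul_assoc, hcp.eq, mul_assoc]
                _ = p * ((g * (y * x)) * (q * a₂)) := by simp only [mul_assoc]
            rw [key]
            have hps : p ∈ Asa n (k'+1) := Asa_mono (Nat.le_succ k') hp
            have hqa : q * a₂ ∈ Asa n (k'+1) := mul_mem (Asa_mono (Nat.le_succ k') hq) ha₂
            have hcore : g * (y * x) ∈ VV (Asa n (k'+1)) j := by
              rcases hg with rfl | rfl
              · exact core_T hd hTi hEi hy hx
              · exact core_E hd hTi hEi hy hx
            exact sand hps hcore hqa
    intro x hx
    simpa using CL x hx 1 h1V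
  · -- V ≤ A (m+1)
    have hAle : Subalgebra.toSubmodule (Asa n m) ≤ Subalgebra.toSubmodule (Asa n (m+1)) :=
      Asa_mono (Nat.le_succ m)
    have hBle : Bsub j ≤ Subalgebra.toSubmodule (Asa n (m+1)) := by
      rw [Bsub, Submodule.span_le]
      rintro x (rfl | rfl | rfl | rfl)
      · exact (Subalgebra.mem_toSubmodule _).mpr (one_mem _)
      · exact (Subalgebra.mem_toSubmodule _).mpr hTj
      · exact (Subalgebra.mem_toSubmodule _).mpr hEj
      · exact (Subalgebra.mem_toSubmodule _).mpr (mul_mem hEj hTj)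
    refine Submodule.mul_le.mpr fun w hw c hc => ?_
    have hw' : w ∈ Asa n (m+1) := Submodule.mul_le.mpr
      (fun a ha x hx => (Subalgebra.mem_toSubmodule _).mpr
        (mul_mem ((Subalgebra.mem_toSubmodule _).mp (hAle ha))
          ((Subalgebra.mem_toSubmodule _).mp (hBle hx)))) hw
    exact (Subalgebra.mem_toSubmodule _).mpr
      (mul_mem hw' ((Subalgebra.mem_toSubmodule _).mp (hAle hc)))

lemma B_fg (j : Fin (n-1)) : (Bsub j).FG :=
  Submodule.fg_span (Set.toFinite _)

lemma Asa_fg (m : ℕ) (hm : m ≤ n-1) : (Subalgebra.toSubmodule (Asa n m)).FG := by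
  induction m with
  | zero =>
    rw [Asa_zero, Algebra.toSubmodule_bot, Submodule.one_eq_span]
    exact Submodule.fg_span (Set.finite_singleton _)
  | succ k ih =>
    have hk : k < n - 1 := by omega
    rw [STR k hk]
    exact ((ih (by omega)).mul (B_fg _)).mul (ih (by omega))

lemma Asa_top : Asa n (n-1) = ⊤ := by
  apply le_antisymm le_top
  intro x hx
  obtain ⟨y, rfl⟩ := RingQuot.mkAlgHom_surjective K (EnRel n) x
  clear hx
  induction y using FreeAlgebra.induction with
  | grade0 r => simpa using (Asa n (n-1)).algebraMap_mem r
  | grade1 g =>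
    cases g with
    | T i => exact Algebra.subset_adjoin ⟨i, i.isLt, Or.inl rfl⟩
    | E i => exact Algebra.subset_adjoin ⟨i, i.isLt, Or.inr rfl⟩
  | mul a b ha hb => rw [map_mul]; exact mul_mem ha hb
  | add a b ha hb => rw [map_add]; exact add_mem ha hb

end EnAux

/-- The algebra `ℰ_n(u)` is finite dimensional over `K = ℂ(u)`. -/
theorem stmt3 (n : ℕ) (hn : 2 ≤ n) : FiniteDimensional K (En n) := by
  have h := EnAux.Asa_fg (n := n) (n-1) le_rfl
  rw [EnAux.Asa_top, Algebra.top_toSubmodule] at h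
  exact Module.finite_def.mpr h
end
end

section
/- Let A_n denote the unital subalgebra of ℰ_{n+1}(u) generated by T_1,…,T_{n−1}, E_1,…,E_{n−1}. Then every element of ℰ_{n+1}(u) lies in the K-linear span of A_n together with all products Y_iY_{i+1}⋯Y_n·x, where 1 ≤ i ≤ n, each Y_j ∈ {T_j, E_j, T_jE_j}, and x ∈ A_n. -/
noncomputable section

open FreeAlgebra

/-- The unital subalgebra `A_n` of `ℰ_{n+1}(u)` generated by
`T_1, …, T_{n-1}, E_1, …, E_{n-1}` (here indexed by `0, …, n-2`). -/
def An (n : ℕ) : Subalgebra K (En (n + 1)) :=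
  Algebra.adjoin K
    {x : En (n + 1) | ∃ i : Fin n, (i : ℕ) < n - 1 ∧ (x = T (n := n + 1) i ∨ x = E (n := n + 1) i)}
namespace EAux

/-- scalar `c = u⁻¹ - 1`. -/
def cc : K := u⁻¹ - 1
/-- scalar `d = u - 1`. -/
def dd : K := u - 1

lemma u_ne_zero : (u : K) ≠ 0 := RatFunc.X_ne_zero

lemma hcd : cc + dd + dd * cc = 0 := by
  have h := u_ne_zero
  unfold cc dd
  field_simp
  ring

variable {N : ℕ}

lemma relq {x y : FA N} (h : EnRel N x y) :
    RingQuot.mkAlgHom K (EnRel N) x = RingQuot.mkAlgHom K (EnRel N) y :=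
  RingQuot.mkAlgHom_rel K h

variable (w : En N)

lemma ET_w (i : Fin (N - 1)) : E i * (T i * w) = T i * (E i * w) := by
  have h : E i * T i = T i * E i := by
    have h := relq (EnRel.ET i); simp only [map_mul] at h; exact h
  rw [← mul_assoc, h, mul_assoc]

lemma Ei_w (i : Fin (N - 1)) : E i * (E i * w) = E i * w := by
  have h : E i * E i = E i := by
    have h := relq (EnRel.Eidem i); simp only [map_mul] at h; exact h
  rw [← mul_assoc, h]

lemma EE_w (i j : Fin (N - 1)) : E i * (E j * w) = E j * (E i * w) := by
  have h : E i * E j = E j * E i := by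
    have h := relq (EnRel.EE i j); simp only [map_mul] at h; exact h
  rw [← mul_assoc, h, mul_assoc]

lemma TTf_w {i j : Fin (N - 1)} (hd : 1 < Nat.dist i j) :
    T i * (T j * w) = T j * (T i * w) := by
  have h : T i * T j = T j * T i := by
    have h := relq (EnRel.TTfar hd); simp only [map_mul] at h; exact h
  rw [← mul_assoc, h, mul_assoc]

lemma ETf_w {i j : Fin (N - 1)} (hd : 1 < Nat.dist i j) :
    E i * (T j * w) = T j * (E i * w) := by
  have h : E i * T j = T j * E i := by
    have h := relq (EnRel.ETfar hd); simp only [map_mul] at h; exact h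
  rw [← mul_assoc, h, mul_assoc]

lemma braid_w {i j : Fin (N - 1)} (hd : Nat.dist i j = 1) :
    T i * (T j * (T i * w)) = T j * (T i * (T j * w)) := by
  have h : T i * T j * T i = T j * T i * T j := by
    have h := relq (EnRel.braid hd); simp only [map_mul] at h; exact h
  simp only [← mul_assoc] at h ⊢
  rw [h]

lemma ETT_w {i j : Fin (N - 1)} (hd : Nat.dist i j = 1) :
    E j * (T i * (T j * w)) = T i * (T j * (E i * w)) := by
  have h : E j * (T i * T j) = T i * T j * E i := by
    have h := relq (EnRel.ETT hd); simp only [map_mul] at h; exact h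
  simp only [← mul_assoc] at h ⊢
  rw [h]

lemma EET_w {i j : Fin (N - 1)} (hd : Nat.dist i j = 1) :
    E i * (E j * (T j * w)) = E i * (T j * (E i * w)) := by
  have h : E i * E j * T j = E i * T j * E i := by
    have h := relq (EnRel.EET hd); simp only [map_mul] at h; exact h
  simp only [← mul_assoc] at h ⊢
  rw [h]

lemma ETE_w {i j : Fin (N - 1)} (hd : Nat.dist i j = 1) :
    E i * (T j * (E i * w)) = T j * (E i * (E j * w)) := by
  have h : E i * T j * E i = T j * (E i * E j) := by
    have h := relq (EnRel.ETE hd); simp only [map_mul] at h; exact h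
  simp only [← mul_assoc] at h ⊢
  rw [h]

lemma Tsq_w (i : Fin (N - 1)) :
    T i * (T i * w) = w + cc • (E i * w) - cc • (E i * (T i * w)) := by
  have h : T i * T i = 1 + cc • (E i * (1 - T i)) := by
    have h := relq (EnRel.Tsq i)
    simp only [map_mul, map_add, map_one, map_smul, map_sub] at h
    exact h
  rw [← mul_assoc, h]
  simp only [mul_sub, mul_one, smul_sub, add_mul, one_mul, smul_mul_assoc, sub_mul, mul_assoc,
    add_sub_assoc]

end EAux
namespace EAux

variable {N : ℕ}

/-- The inverse of `T i`. -/
def S (i : Fin (N - 1)) : En N := T i - dd • E i + dd • (E i * T i)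

lemma lin3 (C A B : En N) :
    C + cc • A - cc • B - dd • B + dd • (A + cc • A - cc • B) = C := by
  rw [smul_sub, smul_add, smul_smul, smul_smul]
  have h : C + cc • A - cc • B - dd • B + (dd • A + (dd * cc) • A - (dd * cc) • B)
      = C + (cc + dd + dd * cc) • A - (cc + dd + dd * cc) • B := by
    simp only [add_smul]; abel
  rw [h, hcd, zero_smul]
  simp

variable (w : En N)

lemma TS_w (i : Fin (N - 1)) : T i * (S i * w) = w := by
  simp only [S, sub_mul, add_mul, smul_mul_assoc, mul_sub, mul_add, mul_smul_comm, mul_assoc]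
  rw [show T i * (E i * w) = E i * (T i * w) from (ET_w w i).symm,
      show T i * (E i * (T i * w)) = E i * (T i * (T i * w)) from (ET_w _ i).symm, Tsq_w]
  simp only [mul_add, mul_sub, mul_smul_comm, Ei_w]
  generalize E i * (T i * w) = B
  generalize E i * w = A
  exact lin3 w A B

lemma ST_w (i : Fin (N - 1)) : S i * (T i * w) = w := by
  simp only [S, sub_mul, add_mul, smul_mul_assoc, mul_assoc]
  rw [Tsq_w]
  simp only [mul_add, mul_sub, mul_smul_comm, Ei_w]
  generalize E i * (T i * w) = B
  generalize E i * w = A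
  exact lin3 w A B

lemma EaTb_w {a b : Fin (N - 1)} (hd : Nat.dist a b = 1) :
    E a * (T b * w) = T b * (T a * (E b * (S a * w))) := by
  have hd' : Nat.dist (b : ℕ) a = 1 := by rwa [Nat.dist_comm]
  calc E a * (T b * w) = E a * (T b * (T a * (S a * w))) := by rw [TS_w]
    _ = T b * (T a * (E b * (S a * w))) := ETT_w _ hd'

end EAux
namespace EAux

variable {N : ℕ} (w : En N)

lemma TES_w (a : Fin (N - 1)) : T a * (E a * (S a * w)) = E a * w := by
  rw [← ET_w, TS_w]

section Adjacent

variable {a b : Fin (N - 1)} (hd : Nat.dist a b = 1)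

private lemma hd' (hd : Nat.dist (a : ℕ) b = 1) : Nat.dist (b : ℕ) a = 1 := by
  rwa [Nat.dist_comm]

lemma C1 (hd : Nat.dist (a : ℕ) b = 1) : T b * (T a * (T b * w)) = T a * (T b * (T a * w)) :=
  braid_w w (hd' hd)

lemma C2 (hd : Nat.dist (a : ℕ) b = 1) : T b * (T a * (E b * w)) = E a * (T b * (T a * w)) :=
  (ETT_w w (hd' hd)).symm

lemma C3 (hd : Nat.dist (a : ℕ) b = 1) : T b * (T a * (T b * (E b * w))) = T a * (E a * (T b * (T a * w))) := by
  rw [C1 (E b * w) hd, C2 w hd]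

lemma C5 (hd : Nat.dist (a : ℕ) b = 1) : T b * (E a * (E b * w)) = E a * (T b * (E a * w)) :=
  (ETE_w w hd).symm

lemma C8 (hd : Nat.dist (a : ℕ) b = 1) : T b * (T a * (E a * (E b * w))) = E a * (T b * (T a * (E a * w))) := by
  rw [EE_w w a b, C2 (E a * w) hd]

lemma C4 (hd : Nat.dist (a : ℕ) b = 1) : T b * (E a * (T b * w)) =
    T a * (E b * (S a * w)) + cc • (T a * (E b * (E a * (S a * w))))
      - cc • (E a * (T b * (E a * w))) := by
  rw [EaTb_w w hd, Tsq_w (T a * (E b * (S a * w))) b,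
      ETE_w (S a * w) (hd' hd), ET_w (T a * (E b * (S a * w))) b,
      ETE_w (S a * w) (hd' hd), C2 (E a * (S a * w)) hd, TES_w w a]

lemma C6 (hd : Nat.dist (a : ℕ) b = 1) : T b * (E a * (T b * (E b * w))) =
    T a * (E a * (E b * (S a * w))) + cc • (T a * (E a * (E b * (E a * (S a * w)))))
      - cc • (E a * (T b * (E a * w))) := by
  rw [show T b * (E b * w) = E b * (T b * w) from (ET_w w b).symm,
      C5 (T b * w) hd, C4 w hd]
  simp only [mul_add, mul_sub, mul_smul_comm]
  rw [ET_w (E b * (S a * w)) a, ET_w (E b * (E a * (S a * w))) a,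
      Ei_w (T b * (E a * w)) a]

lemma C7 (hd : Nat.dist (a : ℕ) b = 1) : T b * (T a * (E a * (T b * w))) =
    T a * (T b * (E b * (S a * w))) + cc • (T a * (E a * (T b * (E a * (S a * w)))))
      - cc • (T a * (E a * (T b * (E a * w)))) := by
  rw [EaTb_w w hd, braid_w (T a * (E b * (S a * w))) (hd' hd),
      Tsq_w (E b * (S a * w)) a]
  simp only [mul_add, mul_sub, mul_smul_comm]
  rw [C5 (S a * w) hd, ET_w (E b * (S a * w)) a, EE_w (S a * w) a b,
      C2 (E a * (S a * w)) hd, TES_w w a]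

lemma C9 (hd : Nat.dist (a : ℕ) b = 1) : T b * (T a * (E a * (T b * (E b * w)))) =
    T a * (E a * (T b * (E b * (S a * w)))) + cc • (T a * (E a * (T b * (E a * (S a * w)))))
      - cc • (T a * (E a * (T b * (E a * w)))) := by
  rw [show T b * (E b * w) = E b * (T b * w) from (ET_w w b).symm,
      C8 (T b * w) hd, C7 w hd]
  simp only [mul_add, mul_sub, mul_smul_comm]
  rw [ET_w (T b * (E b * (S a * w))) a,
      ET_w (E a * (T b * (E a * (S a * w)))) a, Ei_w (T b * (E a * (S a * w))) a,
      ET_w (E a * (T b * (E a * w))) a, Ei_w (T b * (E a * w)) a]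

lemma C10 (hd : Nat.dist (a : ℕ) b = 1) : E b * (T a * (T b * w)) = T a * (T b * (E a * w)) :=
  ETT_w w hd

lemma C11 (hd : Nat.dist (a : ℕ) b = 1) : E b * (T a * (E b * w)) = T a * (E b * (E a * w)) :=
  ETE_w w (hd' hd)

lemma C12 (hd : Nat.dist (a : ℕ) b = 1) : E b * (T a * (T b * (E b * w))) = T a * (T b * (E b * (E a * w))) := by
  rw [C10 (E b * w) hd, EE_w w a b]

lemma C13 (hd : Nat.dist (a : ℕ) b = 1) : E b * (E a * (T b * w)) = E a * (T b * (E a * w)) := by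
  rw [EE_w (T b * w) b a]
  exact EET_w w hd

lemma C14 : E b * (E a * (E b * w)) = E a * (E b * w) := by
  rw [EE_w (E b * w) b a, Ei_w w b]

lemma C15 (hd : Nat.dist (a : ℕ) b = 1) : E b * (E a * (T b * (E b * w))) = E a * (T b * (E a * w)) := by
  rw [show T b * (E b * w) = E b * (T b * w) from (ET_w w b).symm, C14 (T b * w)]
  exact EET_w w hd

lemma C16 (hd : Nat.dist (a : ℕ) b = 1) : E b * (T a * (E a * (T b * w))) = T a * (E a * (T b * (E a * w))) := by
  rw [EaTb_w w hd, C10 (T a * (E b * (S a * w))) hd, ET_w (E b * (S a * w)) a,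
      EE_w (S a * w) a b, C2 (E a * (S a * w)) hd, TES_w w a]

lemma C17 (hd : Nat.dist (a : ℕ) b = 1) : E b * (T a * (E a * (E b * w))) = T a * (E b * (E a * w)) := by
  rw [EE_w w a b, C11 (E a * w) hd, Ei_w w a]

lemma C18 (hd : Nat.dist (a : ℕ) b = 1) : E b * (T a * (E a * (T b * (E b * w)))) = T a * (E a * (T b * (E b * w))) := by
  rw [show T b * (E b * w) = E b * (T b * w) from (ET_w w b).symm,
      EE_w (T b * w) a b, C11 (E a * (T b * w)) hd, Ei_w (T b * w) a,
      EE_w (T b * w) b a, ET_w w b]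

end Adjacent
end EAux
namespace EAux

variable {N : ℕ} (w : En N)

lemma D1 (i : Fin (N - 1)) :
    T i * (T i * w) = w + cc • (E i * w) - cc • ((T i * E i) * w) := by
  rw [Tsq_w w i, ET_w w i, ← mul_assoc (T i) (E i) w]

lemma D3 (i : Fin (N - 1)) :
    T i * ((T i * E i) * w) = E i * w + cc • (E i * w) - cc • ((T i * E i) * w) := by
  conv_lhs => rw [mul_assoc]
  rw [Tsq_w (E i * w) i, Ei_w w i, ET_w (E i * w) i, Ei_w w i,
    ← mul_assoc (T i) (E i) w]

lemma D4 (i : Fin (N - 1)) : E i * (T i * w) = (T i * E i) * w := by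
  rw [ET_w, ← mul_assoc]

lemma D6 (i : Fin (N - 1)) : E i * ((T i * E i) * w) = (T i * E i) * w := by
  conv_lhs => rw [mul_assoc]
  rw [ET_w (E i * w) i, Ei_w w i, ← mul_assoc]

/-! base commutation lemmas for distant generators -/

lemma bTT {p q : Fin (N - 1)} (hd : 1 < Nat.dist p q) : Commute (T p) (T q) := by
  have h := relq (EnRel.TTfar hd); simp only [map_mul] at h; exact h

lemma bTE {p q : Fin (N - 1)} (hd : 1 < Nat.dist p q) : Commute (T p) (E q) := by
  have hd' : 1 < Nat.dist (q : ℕ) p := by rwa [Nat.dist_comm]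
  have h := relq (EnRel.ETfar hd'); simp only [map_mul] at h
  exact h.symm

lemma bET {p q : Fin (N - 1)} (hd : 1 < Nat.dist p q) : Commute (E p) (T q) := by
  have h := relq (EnRel.ETfar hd); simp only [map_mul] at h; exact h

lemma bEE (p q : Fin (N - 1)) : Commute (E p) (E q) := by
  have h := relq (EnRel.EE p q); simp only [map_mul] at h; exact h

lemma commute_of_adjoin {s : Set (En N)} {y z : En N} (h : ∀ x ∈ s, Commute x y)
    (hz : z ∈ Algebra.adjoin K s) : Commute z y := by
  induction hz using Algebra.adjoin_induction with
  | mem x hx => exact h x hx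
  | algebraMap r => exact Algebra.commutes r y
  | add x₁ x₂ _ _ h1 h2 => exact h1.add_left h2
  | mul x₁ x₂ _ _ h1 h2 => exact h1.mul_left h2

/-- The subalgebra generated by the generators of a single index. -/
def Pa (a : Fin (N - 1)) : Subalgebra K (En N) :=
  Algebra.adjoin K ({T a, E a} : Set (En N))

lemma T_mem_Pa (a : Fin (N - 1)) : T a ∈ Pa a :=
  Algebra.subset_adjoin (Set.mem_insert _ _)

lemma E_mem_Pa (a : Fin (N - 1)) : E a ∈ Pa a :=
  Algebra.subset_adjoin (Set.mem_insert_of_mem _ rfl)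

lemma S_mem_Pa (a : Fin (N - 1)) : S a ∈ Pa a := by
  exact add_mem (sub_mem (T_mem_Pa a) (Subalgebra.smul_mem _ (E_mem_Pa a) _))
    (Subalgebra.smul_mem _ (mul_mem (E_mem_Pa a) (T_mem_Pa a)) _)

lemma one_mem_Pa (a : Fin (N - 1)) : (1 : En N) ∈ Pa a := one_mem _

lemma Pa_commute_T {a q : Fin (N - 1)} (hd : 1 < Nat.dist a q) {z : En N}
    (hz : z ∈ Pa a) : Commute z (T q) := by
  refine commute_of_adjoin ?_ hz
  rintro x (rfl | rfl)
  · exact bTT hd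
  · exact bET hd

lemma Pa_commute_E {a q : Fin (N - 1)} (hd : 1 < Nat.dist a q) {z : En N}
    (hz : z ∈ Pa a) : Commute z (E q) := by
  refine commute_of_adjoin ?_ hz
  rintro x (rfl | rfl)
  · exact bTE hd
  · exact bEE a q

end EAux
namespace EAux

section Main

variable {n : ℕ}

/-- product of the letters `Y` over the interval `[i, j)` -/
def pI (Y : ℕ → En (n + 1)) (i j : ℕ) : En (n + 1) := ((List.Ico i j).map Y).prod

lemma pI_nil (Y : ℕ → En (n + 1)) {i j : ℕ} (h : j ≤ i) : pI Y i j = 1 := by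
  simp [pI, List.Ico.eq_nil_of_le h]

lemma pI_cons (Y : ℕ → En (n + 1)) {i j : ℕ} (h : i < j) :
    pI Y i j = Y i * pI Y (i + 1) j := by
  rw [pI, List.Ico.eq_cons h]; simp [pI]

lemma pI_split (Y : ℕ → En (n + 1)) {i k j : ℕ} (h1 : i ≤ k) (h2 : k ≤ j) :
    pI Y i j = pI Y i k * pI Y k j := by
  rw [pI, ← List.Ico.append_consecutive h1 h2, List.map_append, List.prod_append]; rfl

lemma pI_congr {Y Z : ℕ → En (n + 1)} {i j : ℕ} (h : ∀ m, i ≤ m → m < j → Y m = Z m) :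
    pI Y i j = pI Z i j := by
  unfold pI; congr 1
  apply List.map_congr_left
  intro m hm
  rw [List.Ico.mem] at hm
  exact h m hm.1 hm.2

lemma commute_pI {z : En (n + 1)} {Y : ℕ → En (n + 1)} {i j : ℕ}
    (hc : ∀ m, i ≤ m → m < j → Commute z (Y m)) : Commute z (pI Y i j) := by
  apply Commute.list_prod_right
  intro x hx
  simp only [List.mem_map] at hx
  obtain ⟨m, hm, rfl⟩ := hx
  rw [List.Ico.mem] at hm
  exact hc m hm.1 hm.2

/-- allowed letters at position `k` -/
def OkL (k : ℕ) (hk : k < n) (L : En (n + 1)) : Prop :=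
  L = T ⟨k, hk⟩ ∨ L = E ⟨k, hk⟩ ∨ L = T ⟨k, hk⟩ * E ⟨k, hk⟩

/-- allowed letter functions starting at `i` -/
def OkY (i : ℕ) (Y : ℕ → En (n + 1)) : Prop :=
  ∀ (j : ℕ) (_ : i ≤ j) (hj : j < n),
    Y j = T ⟨j, hj⟩ ∨ Y j = E ⟨j, hj⟩ ∨ Y j = T ⟨j, hj⟩ * E ⟨j, hj⟩

/-- the span appearing in the statement -/
def Mn (n : ℕ) : Submodule K (En (n + 1)) :=
  Submodule.span K
    ((An n : Set (En (n + 1))) ∪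
      {z : En (n + 1) | ∃ (i : ℕ), i < n ∧ ∃ (Y : ℕ → En (n + 1)) (x : En (n + 1)),
        x ∈ An n ∧
        (∀ (j : ℕ) (_ : i ≤ j) (hj : j < n),
          Y j = T ⟨j, hj⟩ ∨ Y j = E ⟨j, hj⟩ ∨ Y j = T ⟨j, hj⟩ * E ⟨j, hj⟩) ∧
        z = ((List.Ico i n).map Y).prod * x})

lemma An_subset_M {x : En (n + 1)} (hx : x ∈ An n) : x ∈ Mn n :=
  Submodule.subset_span (Or.inl hx)

lemma chain_mem {i : ℕ} (hi : i < n) {Y : ℕ → En (n + 1)} {x : En (n + 1)}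
    (hx : x ∈ An n) (hY : OkY i Y) : pI Y i n * x ∈ Mn n :=
  Submodule.subset_span (Or.inr ⟨i, hi, Y, x, hx, hY, rfl⟩)

lemma rest_mem {i : ℕ} (hi : i ≤ n) {Y : ℕ → En (n + 1)} {x : En (n + 1)}
    (hx : x ∈ An n) (hY : OkY i Y) : pI Y i n * x ∈ Mn n := by
  rcases eq_or_lt_of_le hi with rfl | h
  · rw [pI_nil _ le_rfl, one_mul]; exact An_subset_M hx
  · exact chain_mem h hx hY

lemma genT_An {k : ℕ} (hk : k < n - 1) (hk' : k < n) :
    (T ⟨k, hk'⟩ : En (n + 1)) ∈ An n :=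
  Algebra.subset_adjoin ⟨⟨k, hk'⟩, hk, Or.inl rfl⟩

lemma genE_An {k : ℕ} (hk : k < n - 1) (hk' : k < n) :
    (E ⟨k, hk'⟩ : En (n + 1)) ∈ An n :=
  Algebra.subset_adjoin ⟨⟨k, hk'⟩, hk, Or.inr rfl⟩

lemma letter_An {k : ℕ} (hk : k < n - 1) (hk' : k < n) {L : En (n + 1)}
    (hL : OkL k hk' L) : L ∈ An n := by
  rcases hL with rfl | rfl | rfl
  · exact genT_An hk hk'
  · exact genE_An hk hk'
  · exact mul_mem (genT_An hk hk') (genE_An hk hk')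

lemma Pa_le_An {a : Fin (n + 1 - 1)} (ha : (a : ℕ) < n - 1) : Pa a ≤ An n := by
  apply Algebra.adjoin_le
  rintro x (rfl | rfl)
  · exact Algebra.subset_adjoin ⟨a, ha, Or.inl rfl⟩
  · exact Algebra.subset_adjoin ⟨a, ha, Or.inr rfl⟩

lemma dist_far {p q : ℕ} (h : p + 2 ≤ q ∨ q + 2 ≤ p) : 1 < Nat.dist p q := by
  rcases h with h | h <;> (simp [Nat.dist]; omega)

lemma dist_adj (p : ℕ) : Nat.dist p (p + 1) = 1 := by simp [Nat.dist]

lemma commute_okL {z : En (n + 1)} {q : ℕ} (hq : q < n) {L : En (n + 1)}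
    (hL : OkL q hq L) (h1 : Commute z (T ⟨q, hq⟩)) (h2 : Commute z (E ⟨q, hq⟩)) :
    Commute z L := by
  rcases hL with rfl | rfl | rfl
  · exact h1
  · exact h2
  · exact h1.mul_right h2

end Main

end EAux
namespace EAux

section Main2

variable {n : ℕ}

lemma letter_mem {k : ℕ} (hk : k < n) {g : En (n + 1)} (hg : OkL k hk g)
    {Y : ℕ → En (n + 1)} (hY : OkY (k + 1) Y) {x : En (n + 1)} (hx : x ∈ An n) :
    g * (pI Y (k + 1) n * x) ∈ Mn n := by
  have h1 : pI (Function.update Y k g) k n = g * pI Y (k + 1) n := by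
    rw [pI_cons _ hk, Function.update_self]
    congr 1
    exact pI_congr fun m hm1 hm2 => Function.update_of_ne (by omega) _ _
  have h2 : g * (pI Y (k + 1) n * x) = pI (Function.update Y k g) k n * x := by
    rw [h1, mul_assoc]
  rw [h2]
  refine chain_mem hk hx ?_
  intro j hj1 hj2
  rcases eq_or_lt_of_le hj1 with rfl | h
  · rw [Function.update_self]; exact hg
  · rw [Function.update_of_ne (by omega)]; exact hY j (by omega) hj2

lemma pair_mem {i a' : ℕ} (hi : i < n) (hia : i ≤ a') (hk : a' + 1 < n)
    {Y : ℕ → En (n + 1)} (hY : OkY i Y) {x : En (n + 1)} (hx : x ∈ An n)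
    {La Lb h : En (n + 1)} (hLa : OkL a' (by omega) La) (hLb : OkL (a' + 1) hk Lb)
    (hh : h ∈ Pa ⟨a', (by omega : a' < n)⟩) :
    pI Y i a' * (La * (Lb * (h * (pI Y (a' + 2) n * x)))) ∈ Mn n := by
  have hha : h ∈ An n := Pa_le_An (show (((⟨a', by omega⟩ : Fin (n + 1 - 1))) : ℕ) < n - 1 by
    simpa using by omega) hh
  have hcomm : Commute h (pI Y (a' + 2) n) := by
    refine commute_pI fun m hm1 hm2 => ?_
    refine commute_okL hm2 (hY m (by omega) hm2) ?_ ?_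
    · exact Pa_commute_T (by simpa using dist_far (Or.inl (by omega))) hh
    · exact Pa_commute_E (by simpa using dist_far (Or.inl (by omega))) hh
  set Y'' := Function.update (Function.update Y a' La) (a' + 1) Lb with hY''def
  have hY'' : OkY i Y'' := by
    intro j hj1 hj2
    by_cases e1 : j = a' + 1
    · subst e1; rw [hY''def, Function.update_self]; exact hLb
    · rw [hY''def, Function.update_of_ne e1]
      by_cases e2 : j = a'
      · subst e2; rw [Function.update_self]; exact hLa
      · rw [Function.update_of_ne e2]; exact hY j hj1 hj2
  have h2 : pI Y'' i n = pI Y i a' * (La * (Lb * pI Y (a' + 2) n)) := by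
    rw [pI_split Y'' (show i ≤ a' by omega) (show a' ≤ n by omega),
        pI_cons Y'' (show a' < n by omega), pI_cons Y'' hk]
    congr 1
    · exact pI_congr fun m hm1 hm2 => by
        rw [hY''def, Function.update_of_ne (by omega), Function.update_of_ne (by omega)]
    congr 1
    · rw [hY''def, Function.update_of_ne (by omega), Function.update_self]
    congr 1
    · rw [hY''def, Function.update_self]
    · exact pI_congr fun m hm1 hm2 => by
        rw [hY''def, Function.update_of_ne (by omega), Function.update_of_ne (by omega)]
  have h3 : pI Y i a' * (La * (Lb * (h * (pI Y (a' + 2) n * x)))) = pI Y'' i n * (h * x) := by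
    rw [h2]
    have hc : h * (pI Y (a' + 2) n * x) = pI Y (a' + 2) n * (h * x) := by
      rw [← mul_assoc, hcomm.eq, mul_assoc]
    rw [hc]
    simp only [mul_assoc]
  rw [h3]
  exact chain_mem hi (mul_mem hha hx) hY''

end Main2

end EAux
namespace EAux

section Main3

variable {n : ℕ}

lemma mainMul {k : ℕ} (hk : k < n) {g : En (n + 1)}
    (hg : g = T ⟨k, hk⟩ ∨ g = E ⟨k, hk⟩) {z : En (n + 1)} (hz : z ∈ Mn n) :
    g * z ∈ Mn n := by
  have hgOk : OkL k hk g := by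
    rcases hg with rfl | rfl
    · exact Or.inl rfl
    · exact Or.inr (Or.inl rfl)
  unfold Mn at hz
  induction hz using Submodule.span_induction with
  | zero => rw [mul_zero]; exact zero_mem _
  | add p q hp hq hp' hq' => rw [mul_add]; exact add_mem hp' hq'
  | smul c p hp hp' => rw [mul_smul_comm]; exact Submodule.smul_mem _ _ hp'
  | mem p hp =>
    rcases hp with hp | ⟨i, hi, Y, x, hx, hY, rfl⟩
    · -- p is an element of `An n`
      rcases lt_or_ge k (n - 1) with hk1 | hk1
      · have hgA : g ∈ An n := letter_An hk1 hk hgOk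
        exact An_subset_M (mul_mem hgA hp)
      · -- k = n - 1
        have h1 : g * p = g * (pI (fun _ => (1 : En (n + 1))) (k + 1) n * p) := by
          rw [pI_nil _ (by omega), one_mul]
        rw [h1]
        exact letter_mem hk hgOk (fun j hj1 hj2 => absurd hj2 (by omega)) hp
    · -- chain case
      show g * (pI Y i n * x) ∈ Mn n
      rcases Nat.lt_trichotomy (k + 1) i with hlt | heq | hgt
      · -- k + 1 < i : commute through
        have hgA : g ∈ An n := letter_An (by omega) hk hgOk
        have hcomm : Commute g (pI Y i n) := by
          refine commute_pI fun m hm1 hm2 => ?_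
          refine commute_okL hm2 (hY m hm1 hm2) ?_ ?_ <;> rcases hg with rfl | rfl
          · exact bTT (dist_far (Or.inl (show k + 2 ≤ m by omega)))
          · exact bET (dist_far (Or.inl (show k + 2 ≤ m by omega)))
          · exact bTE (dist_far (Or.inl (show k + 2 ≤ m by omega)))
          · exact bEE _ _
        have h1 : g * (pI Y i n * x) = pI Y i n * (g * x) := by
          rw [← mul_assoc, hcomm.eq, mul_assoc]
        rw [h1]
        exact chain_mem hi (mul_mem hgA hx) hY
      · -- k + 1 = i : prepend letter
        subst heq
        exact letter_mem hk hgOk hY hx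
      · -- i ≤ k
        have hYrest : OkY (k + 1) Y := fun j hj1 hj2 => hY j (by omega) hj2
        rcases eq_or_lt_of_le (Nat.lt_succ_iff.mp hgt) with heq2 | hlt2
        · -- i = k : same index
          subst heq2
          rw [pI_cons Y hk, mul_assoc]
          have hw0 : pI Y (i + 1) n * x ∈ Mn n := rest_mem (by omega) hx hYrest
          have hT : T ⟨i, hk⟩ * (pI Y (i + 1) n * x) ∈ Mn n :=
            letter_mem hk (Or.inl rfl) hYrest hx
          have hE : E ⟨i, hk⟩ * (pI Y (i + 1) n * x) ∈ Mn n :=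
            letter_mem hk (Or.inr (Or.inl rfl)) hYrest hx
          have hTE : (T ⟨i, hk⟩ * E ⟨i, hk⟩) * (pI Y (i + 1) n * x) ∈ Mn n :=
            letter_mem hk (Or.inr (Or.inr rfl)) hYrest hx
          have hYk := hY i le_rfl hk
          rcases hg with rfl | rfl <;> rcases hYk with h1 | h1 | h1 <;> rw [h1]
          · rw [D1 (pI Y (i + 1) n * x) ⟨i, hk⟩]
            exact sub_mem (add_mem hw0 (Submodule.smul_mem _ _ hE)) (Submodule.smul_mem _ _ hTE)
          · rw [← mul_assoc]; exact hTE
          · rw [D3 (pI Y (i + 1) n * x) ⟨i, hk⟩]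
            exact sub_mem (add_mem hE (Submodule.smul_mem _ _ hE)) (Submodule.smul_mem _ _ hTE)
          · rw [D4 (pI Y (i + 1) n * x) ⟨i, hk⟩]; exact hTE
          · rw [Ei_w (pI Y (i + 1) n * x) ⟨i, hk⟩]; exact hE
          · rw [D6 (pI Y (i + 1) n * x) ⟨i, hk⟩]; exact hTE
        · -- i < k : adjacent pair case
          obtain ⟨a', rfl⟩ : ∃ a', k = a' + 1 := ⟨k - 1, by omega⟩
          have hia : i ≤ a' := by omega
          have han : a' < n := by omega
          have hd : Nat.dist (((⟨a', by omega⟩ : Fin (n + 1 - 1))) : ℕ)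
              ((⟨a' + 1, hk⟩ : Fin (n + 1 - 1)) : ℕ) = 1 := dist_adj a'
          have hsplit : pI Y i n = pI Y i a' * (Y a' * (Y (a' + 1) * pI Y (a' + 2) n)) := by
            rw [pI_split Y (show i ≤ a' by omega) (show a' ≤ n by omega),
              pI_cons Y (show a' < n by omega), pI_cons Y hk]
          have hgP1 : Commute g (pI Y i a') := by
            refine commute_pI fun m hm1 hm2 => ?_
            refine commute_okL (show m < n by omega) (hY m hm1 (by omega)) ?_ ?_ <;>
              rcases hg with rfl | rfl
            · exact bTT (dist_far (Or.inr (show m + 2 ≤ a' + 1 by omega)))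
            · exact bET (dist_far (Or.inr (show m + 2 ≤ a' + 1 by omega)))
            · exact bTE (dist_far (Or.inr (show m + 2 ≤ a' + 1 by omega)))
            · exact bEE _ _
          have step1 : g * (pI Y i n * x)
              = pI Y i a' * (g * (Y a' * (Y (a' + 1) * (pI Y (a' + 2) n * x)))) := by
            rw [hsplit]
            simp only [mul_assoc]
            rw [hgP1.left_comm]
          rw [step1]
          have hYa := hY a' (by omega) (by omega)
          have hYb := hY (a' + 1) (by omega) hk
          rcases hg with rfl | rfl <;> rcases hYa with h1 | h1 | h1 <;>
            rcases hYb with h2 | h2 | h2 <;> rw [h1, h2] <;> (try simp only [mul_assoc])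
          -- `T` cases
          · rw [C1 (pI Y (a' + 2) n * x) hd]
            simpa only [mul_assoc] using
              pair_mem hi hia hk hY hx (Or.inl rfl) (Or.inl rfl) (T_mem_Pa _)
          · rw [C2 (pI Y (a' + 2) n * x) hd]
            simpa only [mul_assoc] using
              pair_mem hi hia hk hY hx (Or.inr (Or.inl rfl)) (Or.inl rfl) (T_mem_Pa _)
          · rw [C3 (pI Y (a' + 2) n * x) hd]
            simpa only [mul_assoc] using
              pair_mem hi hia hk hY hx (Or.inr (Or.inr rfl)) (Or.inl rfl) (T_mem_Pa _)
          · rw [C4 (pI Y (a' + 2) n * x) hd]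
            simp only [mul_add, mul_sub, mul_smul_comm]
            refine sub_mem (add_mem ?_ (Submodule.smul_mem _ _ ?_)) (Submodule.smul_mem _ _ ?_)
            · simpa only [mul_assoc] using
                pair_mem hi hia hk hY hx (Or.inl rfl) (Or.inr (Or.inl rfl)) (S_mem_Pa _)
            · simpa only [mul_assoc] using
                pair_mem hi hia hk hY hx (Or.inl rfl) (Or.inr (Or.inl rfl))
                  (mul_mem (E_mem_Pa _) (S_mem_Pa _))
            · simpa only [mul_assoc] using
                pair_mem hi hia hk hY hx (Or.inr (Or.inl rfl)) (Or.inl rfl) (E_mem_Pa _)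
          · rw [C5 (pI Y (a' + 2) n * x) hd]
            simpa only [mul_assoc] using
              pair_mem hi hia hk hY hx (Or.inr (Or.inl rfl)) (Or.inl rfl) (E_mem_Pa _)
          · rw [C6 (pI Y (a' + 2) n * x) hd]
            simp only [mul_add, mul_sub, mul_smul_comm]
            refine sub_mem (add_mem ?_ (Submodule.smul_mem _ _ ?_)) (Submodule.smul_mem _ _ ?_)
            · simpa only [mul_assoc] using
                pair_mem hi hia hk hY hx (Or.inr (Or.inr rfl)) (Or.inr (Or.inl rfl)) (S_mem_Pa _)
            · simpa only [mul_assoc] using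
                pair_mem hi hia hk hY hx (Or.inr (Or.inr rfl)) (Or.inr (Or.inl rfl))
                  (mul_mem (E_mem_Pa _) (S_mem_Pa _))
            · simpa only [mul_assoc] using
                pair_mem hi hia hk hY hx (Or.inr (Or.inl rfl)) (Or.inl rfl) (E_mem_Pa _)
          · rw [C7 (pI Y (a' + 2) n * x) hd]
            simp only [mul_add, mul_sub, mul_smul_comm]
            refine sub_mem (add_mem ?_ (Submodule.smul_mem _ _ ?_)) (Submodule.smul_mem _ _ ?_)
            · simpa only [mul_assoc] using
                pair_mem hi hia hk hY hx (Or.inl rfl) (Or.inr (Or.inr rfl)) (S_mem_Pa _)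
            · simpa only [mul_assoc] using
                pair_mem hi hia hk hY hx (Or.inr (Or.inr rfl)) (Or.inl rfl)
                  (mul_mem (E_mem_Pa _) (S_mem_Pa _))
            · simpa only [mul_assoc] using
                pair_mem hi hia hk hY hx (Or.inr (Or.inr rfl)) (Or.inl rfl) (E_mem_Pa _)
          · rw [C8 (pI Y (a' + 2) n * x) hd]
            simpa only [mul_assoc] using
              pair_mem hi hia hk hY hx (Or.inr (Or.inl rfl)) (Or.inl rfl)
                (mul_mem (T_mem_Pa _) (E_mem_Pa _))
          · rw [C9 (pI Y (a' + 2) n * x) hd]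
            simp only [mul_add, mul_sub, mul_smul_comm]
            refine sub_mem (add_mem ?_ (Submodule.smul_mem _ _ ?_)) (Submodule.smul_mem _ _ ?_)
            · simpa only [mul_assoc] using
                pair_mem hi hia hk hY hx (Or.inr (Or.inr rfl)) (Or.inr (Or.inr rfl)) (S_mem_Pa _)
            · simpa only [mul_assoc] using
                pair_mem hi hia hk hY hx (Or.inr (Or.inr rfl)) (Or.inl rfl)
                  (mul_mem (E_mem_Pa _) (S_mem_Pa _))
            · simpa only [mul_assoc] using
                pair_mem hi hia hk hY hx (Or.inr (Or.inr rfl)) (Or.inl rfl) (E_mem_Pa _)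
          -- `E` cases
          · rw [C10 (pI Y (a' + 2) n * x) hd]
            simpa only [mul_assoc] using
              pair_mem hi hia hk hY hx (Or.inl rfl) (Or.inl rfl) (E_mem_Pa _)
          · rw [C11 (pI Y (a' + 2) n * x) hd]
            simpa only [mul_assoc] using
              pair_mem hi hia hk hY hx (Or.inl rfl) (Or.inr (Or.inl rfl)) (E_mem_Pa _)
          · rw [C12 (pI Y (a' + 2) n * x) hd]
            simpa only [mul_assoc] using
              pair_mem hi hia hk hY hx (Or.inl rfl) (Or.inr (Or.inr rfl)) (E_mem_Pa _)
          · rw [C13 (pI Y (a' + 2) n * x) hd]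
            simpa only [mul_assoc] using
              pair_mem hi hia hk hY hx (Or.inr (Or.inl rfl)) (Or.inl rfl) (E_mem_Pa _)
          · rw [C14 (pI Y (a' + 2) n * x)]
            simpa only [mul_assoc, one_mul] using
              pair_mem hi hia hk hY hx (Or.inr (Or.inl rfl)) (Or.inr (Or.inl rfl)) (one_mem_Pa _)
          · rw [C15 (pI Y (a' + 2) n * x) hd]
            simpa only [mul_assoc] using
              pair_mem hi hia hk hY hx (Or.inr (Or.inl rfl)) (Or.inl rfl) (E_mem_Pa _)
          · rw [C16 (pI Y (a' + 2) n * x) hd]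
            simpa only [mul_assoc] using
              pair_mem hi hia hk hY hx (Or.inr (Or.inr rfl)) (Or.inl rfl) (E_mem_Pa _)
          · rw [C17 (pI Y (a' + 2) n * x) hd]
            simpa only [mul_assoc] using
              pair_mem hi hia hk hY hx (Or.inl rfl) (Or.inr (Or.inl rfl)) (E_mem_Pa _)
          · rw [C18 (pI Y (a' + 2) n * x) hd]
            simpa only [mul_assoc, one_mul] using
              pair_mem hi hia hk hY hx (Or.inr (Or.inr rfl)) (Or.inr (Or.inr rfl)) (one_mem_Pa _)

end Main3

end EAux
namespace EAux

variable {n : ℕ}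

lemma all_mem_M (z : En (n + 1)) : z ∈ Mn n := by
  obtain ⟨w, rfl⟩ := RingQuot.mkAlgHom_surjective K (EnRel (n + 1)) z
  have key : ∀ w : FA (n + 1), ∀ z ∈ Mn n,
      RingQuot.mkAlgHom K (EnRel (n + 1)) w * z ∈ Mn n := by
    intro w
    induction w using FreeAlgebra.induction with
    | grade0 r =>
      intro z hz
      rw [AlgHom.commutes, ← Algebra.smul_def]
      exact Submodule.smul_mem _ _ hz
    | grade1 g =>
      intro z hz
      cases g with
      | T i => exact mainMul (n := n) i.isLt (Or.inl rfl) hz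
      | E i => exact mainMul (n := n) i.isLt (Or.inr rfl) hz
    | mul a b ha hb =>
      intro z hz
      rw [map_mul, mul_assoc]
      exact ha _ (hb _ hz)
    | add a b ha hb =>
      intro z hz
      rw [map_add, add_mul]
      exact add_mem (ha _ hz) (hb _ hz)
  have h1 : (1 : En (n + 1)) ∈ Mn n := An_subset_M (one_mem _)
  simpa using key w 1 h1

end EAux

/-- Every element of `ℰ_{n+1}(u)` lies in the `K`-linear span of `A_n` together
with the products `Y_i Y_{i+1} ⋯ Y_n ⬝ x` where each `Y_j ∈ {T_j, E_j, T_j E_j}`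
and `x ∈ A_n`. -/
theorem stmt4 (n : ℕ) (hn : 2 ≤ n) (z : En (n + 1)) :
    z ∈ Submodule.span K
      ((An n : Set (En (n + 1))) ∪
        {z : En (n + 1) | ∃ (i : ℕ), i < n ∧ ∃ (Y : ℕ → En (n + 1)) (x : En (n + 1)),
          x ∈ An n ∧
          (∀ (j : ℕ) (_ : i ≤ j) (hj : j < n),
            Y j = T ⟨j, hj⟩ ∨ Y j = E ⟨j, hj⟩ ∨ Y j = T ⟨j, hj⟩ * E ⟨j, hj⟩) ∧
          z = ((List.Ico i n).map Y).prod * x}) :=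
  EAux.all_mem_M z
end
end

section
/- The set {1, T_1, E_1, T_1E_1} is a basis of ℰ_2(u) as a K-vector space; in particular ℰ_2(u) has dimension 4 over K = ℂ(u). -/
noncomputable section

open FreeAlgebra

-- aux
namespace Stmt5Aux

lemma ee : (E 0 : En 2) * E 0 = E 0 := by
  have := RingQuot.mkAlgHom_rel K (EnRel.Eidem (n := 2) 0)
  simpa [E, map_mul] using this

lemma et : (E 0 : En 2) * T 0 = T 0 * E 0 := by
  have := RingQuot.mkAlgHom_rel K (EnRel.ET (n := 2) 0)
  simpa [E, T, map_mul] using this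

lemma tt : (T 0 : En 2) * T 0 = 1 + (u⁻¹ - 1) • ((E 0 : En 2) * (1 - T 0)) := by
  have := RingQuot.mkAlgHom_rel K (EnRel.Tsq (n := 2) 0)
  simpa [E, T, map_mul, map_add, map_smul, map_sub, map_one] using this

end Stmt5Aux
set_option synthInstance.maxHeartbeats 1000000
set_option maxHeartbeats 1000000

def fgen : Gen 2 → (Fin 4 → K)
  | .T _ => ![1, -1, 1, -u⁻¹]
  | .E _ => ![0, 0, 1, 1]

lemma hrel : ∀ ⦃x y : FA 2⦄, EnRel 2 x y →
    FreeAlgebra.lift K fgen x = FreeAlgebra.lift K fgen y := by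
  intro x y h
  induction h with
  | TTfar h =>
      rename_i i j
      exfalso; have h1 := i.isLt; have h2 := j.isLt; simp only [Nat.dist] at h; omega
  | braid h =>
      rename_i i j
      exfalso; have h1 := i.isLt; have h2 := j.isLt; simp only [Nat.dist] at h; omega
  | ETfar h =>
      rename_i i j
      exfalso; have h1 := i.isLt; have h2 := j.isLt; simp only [Nat.dist] at h; omega
  | ETT h =>
      rename_i i j
      exfalso; have h1 := i.isLt; have h2 := j.isLt; simp only [Nat.dist] at h; omega
  | EET h =>
      rename_i i j
      exfalso; have h1 := i.isLt; have h2 := j.isLt; simp only [Nat.dist] at h; omega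
  | ETE h =>
      rename_i i j
      exfalso; have h1 := i.isLt; have h2 := j.isLt; simp only [Nat.dist] at h; omega
  | Eidem i =>
      simp only [fE, map_mul, FreeAlgebra.lift_ι_apply, fgen]
      funext k; fin_cases k <;> simp
  | EE i j =>
      rw [map_mul, map_mul, mul_comm]
  | ET i =>
      rw [map_mul, map_mul, mul_comm]
  | Tsq i =>
      simp only [fE, fT, map_mul, map_add, map_one, map_smul, map_sub,
        FreeAlgebra.lift_ι_apply, fgen]
      funext k
      fin_cases k <;>
        simp [Pi.smul_apply, smul_eq_mul, Pi.one_apply, Matrix.vecHead, Matrix.vecTail] <;> ring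

def ψ : En 2 →ₐ[K] (Fin 4 → K) :=
  RingQuot.liftAlgHom K ⟨FreeAlgebra.lift K fgen, hrel⟩

lemma ψT : ψ (T 0) = ![1, -1, 1, -u⁻¹] := by
  simp [ψ, T, RingQuot.liftAlgHom_mkAlgHom_apply, fT, FreeAlgebra.lift_ι_apply, fgen]

lemma ψE : ψ (E 0) = ![0, 0, 1, 1] := by
  simp [ψ, E, RingQuot.liftAlgHom_mkAlgHom_apply, fE, FreeAlgebra.lift_ι_apply, fgen]
-- concatenated after a.lean (which ends Stmt5Aux) ; reopen
namespace Stmt5Aux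

def bv : Fin 4 → En 2 := ![1, T 0, E 0, T 0 * E 0]

lemma one_plus_inv_ne : (1 : K) + u⁻¹ ≠ 0 := by
  intro h
  have h1 : u⁻¹ = -1 := by linear_combination h
  have hu : u ≠ 0 := by simpa [u] using RatFunc.X_ne_zero (K := ℂ)
  have h2 : u = -1 := by
    have hmul := congrArg (u * ·) h1
    simp only [mul_inv_cancel₀ hu] at hmul
    linear_combination hmul
  have h3 : algebraMap (Polynomial ℂ) K Polynomial.X = algebraMap (Polynomial ℂ) K (-1) := by
    rw [RatFunc.algebraMap_X, map_neg, map_one]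
    exact h2
  have h4 := RatFunc.algebraMap_injective ℂ h3
  have h5 := congrArg (fun p => Polynomial.coeff p 1) h4
  simp [Polynomial.coeff_one] at h5

def w : Fin 4 → (Fin 4 → K) :=
  ![(1 : Fin 4 → K), ![1, -1, 1, -u⁻¹], ![0, 0, 1, 1], ![0, 0, 1, -u⁻¹]]

lemma comp_bv : (⇑ψ ∘ bv) = w := by
  funext k
  fin_cases k
  · show ψ (1 : En 2) = (1 : Fin 4 → K)
    exact map_one ψ
  · show ψ (T 0) = ![1, -1, 1, -u⁻¹]
    exact ψT
  · show ψ (E 0) = ![0, 0, 1, 1]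
    exact ψE
  · show ψ (T 0 * E 0) = ![0, 0, 1, -u⁻¹]
    rw [map_mul, ψT, ψE]
    funext j
    fin_cases j <;> simp [Matrix.vecHead, Matrix.vecTail]

lemma li : LinearIndependent K bv := by
  apply LinearIndependent.of_comp ψ.toLinearMap
  rw [Fintype.linearIndependent_iff]
  intro g hg
  rw [show (⇑ψ.toLinearMap ∘ bv) = w from comp_bv] at hg
  have h0 := congrFun hg 0
  have h1 := congrFun hg 1
  have h2 := congrFun hg 2
  have h3 := congrFun hg 3
  simp [Fin.sum_univ_four, w, Matrix.vecHead, Matrix.vecTail] at h0 h1 h2 h3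
  intro i
  have two_ne : (2 : K) ≠ 0 := by
    intro h
    have h2' : algebraMap (Polynomial ℂ) K 2 = algebraMap (Polynomial ℂ) K 0 := by
      rw [map_zero, map_ofNat]; exact h
    have := RatFunc.algebraMap_injective ℂ h2'
    norm_num at this
  have hg0 : g 0 = 0 := by
    have h01 : (2 : K) * g 0 = 0 := by linear_combination h0 + h1
    exact (mul_eq_zero.1 h01).resolve_left two_ne
  have hg1 : g 1 = 0 := by
    have h01 : (2 : K) * g 1 = 0 := by linear_combination h0 - h1
    exact (mul_eq_zero.1 h01).resolve_left two_ne
  have key : (1 + u⁻¹) * g 3 = 0 := by linear_combination h2 - h3 - (1 + u⁻¹) * hg1 - ((1:K) - 1) * hg0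
  have hg3 : g 3 = 0 := by
    rcases mul_eq_zero.1 key with h | h
    · exact absurd h one_plus_inv_ne
    · exact h
  have hg2 : g 2 = 0 := by linear_combination h2 - hg0 - hg1 - hg3
  fin_cases i <;> assumption

end Stmt5Aux
namespace Stmt5Aux

abbrev S : Submodule K (En 2) := Submodule.span K (Set.range bv)

lemma bv0 : bv 0 = 1 := rfl
lemma bv1 : bv 1 = T 0 := rfl
lemma bv2 : bv 2 = E 0 := rfl
lemma bv3 : bv 3 = T 0 * E 0 := rfl

lemma one_mem : (1 : En 2) ∈ S := Submodule.subset_span ⟨0, rfl⟩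
lemma t_mem : (T 0 : En 2) ∈ S := Submodule.subset_span ⟨1, rfl⟩
lemma e_mem : (E 0 : En 2) ∈ S := Submodule.subset_span ⟨2, rfl⟩
lemma te_mem : (T 0 : En 2) * E 0 ∈ S := Submodule.subset_span ⟨3, rfl⟩

lemma tt' : (T 0 : En 2) * T 0
    = 1 + ((u⁻¹ - 1) • (E 0 : En 2) - (u⁻¹ - 1) • ((T 0 : En 2) * E 0)) := by
  rw [tt, mul_one_sub, et, smul_sub]

lemma tee : ((T 0 : En 2) * E 0) * E 0 = T 0 * E 0 := by rw [mul_assoc, ee]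

lemma tte : (T 0 : En 2) * (T 0 * E 0)
    = E 0 + ((u⁻¹ - 1) • (E 0 : En 2) - (u⁻¹ - 1) • ((T 0 : En 2) * E 0)) := by
  rw [← mul_assoc, tt', add_mul, one_mul, sub_mul, smul_mul_assoc, smul_mul_assoc, ee, tee]

lemma ete : (E 0 : En 2) * (T 0 * E 0) = T 0 * E 0 := by
  rw [← mul_assoc, et, mul_assoc, ee]

lemma tet : ((T 0 : En 2) * E 0) * T 0 = T 0 * (T 0 * E 0) := by
  rw [mul_assoc, et]

lemma tete : ((T 0 : En 2) * E 0) * (T 0 * E 0)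
    = E 0 + ((u⁻¹ - 1) • (E 0 : En 2) - (u⁻¹ - 1) • ((T 0 : En 2) * E 0)) := by
  have : ((T 0 : En 2) * E 0) * (T 0 * E 0) = (((T 0 : En 2) * E 0) * T 0) * E 0 :=
    (mul_assoc ((T 0 : En 2) * E 0) (T 0) (E 0)).symm
  rw [this, tet, tte, add_mul, sub_mul, smul_mul_assoc, smul_mul_assoc, ee, tee]

lemma tt_mem : (T 0 : En 2) * T 0 ∈ S := by
  rw [tt']
  exact add_mem one_mem (sub_mem (Submodule.smul_mem _ _ e_mem) (Submodule.smul_mem _ _ te_mem))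

lemma tte_mem : (T 0 : En 2) * (T 0 * E 0) ∈ S := by
  rw [tte]
  exact add_mem e_mem (sub_mem (Submodule.smul_mem _ _ e_mem) (Submodule.smul_mem _ _ te_mem))

lemma prod_mem : ∀ i j : Fin 4, bv i * bv j ∈ S := by
  intro i j
  fin_cases i <;> fin_cases j
  · show bv 0 * bv 0 ∈ S; rw [bv0, one_mul]; exact one_mem
  · show bv 0 * bv 1 ∈ S; rw [bv0, bv1, one_mul]; exact t_mem
  · show bv 0 * bv 2 ∈ S; rw [bv0, bv2, one_mul]; exact e_mem
  · show bv 0 * bv 3 ∈ S; rw [bv0, bv3, one_mul]; exact te_mem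
  · show bv 1 * bv 0 ∈ S; rw [bv0, bv1, mul_one]; exact t_mem
  · show bv 1 * bv 1 ∈ S; rw [bv1]; exact tt_mem
  · show bv 1 * bv 2 ∈ S; rw [bv1, bv2]; exact te_mem
  · show bv 1 * bv 3 ∈ S; rw [bv1, bv3]; exact tte_mem
  · show bv 2 * bv 0 ∈ S; rw [bv0, bv2, mul_one]; exact e_mem
  · show bv 2 * bv 1 ∈ S; rw [bv1, bv2, et]; exact te_mem
  · show bv 2 * bv 2 ∈ S; rw [bv2, ee]; exact e_mem
  · show bv 2 * bv 3 ∈ S; rw [bv2, bv3, ete]; exact te_mem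
  · show bv 3 * bv 0 ∈ S; rw [bv0, bv3, mul_one]; exact te_mem
  · show bv 3 * bv 1 ∈ S; rw [bv1, bv3, tet]; exact tte_mem
  · show bv 3 * bv 2 ∈ S; rw [bv2, bv3, tee]; exact te_mem
  · show bv 3 * bv 3 ∈ S
    rw [bv3, tete]
    exact add_mem e_mem (sub_mem (Submodule.smul_mem _ _ e_mem) (Submodule.smul_mem _ _ te_mem))

lemma SS_le : S * S ≤ S := by
  rw [Submodule.span_mul_span, Submodule.span_le]
  rintro z hz
  rw [Set.mem_mul] at hz
  obtain ⟨x, hx, y, hy, rfl⟩ := hz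
  obtain ⟨i, rfl⟩ := hx
  obtain ⟨j, rfl⟩ := hy
  exact prod_mem i j

lemma S_top : S = ⊤ := by
  rw [eq_top_iff]
  intro z _
  obtain ⟨x, rfl⟩ := RingQuot.mkAlgHom_surjective K (EnRel 2) z
  induction x using FreeAlgebra.induction with
  | grade0 r =>
      rw [AlgHom.commutes, Algebra.algebraMap_eq_smul_one]
      exact Submodule.smul_mem _ _ one_mem
  | grade1 g =>
      cases g with
      | T i =>
          have : i = 0 := by
            have := i.isLt; exact Fin.ext (by omega)
          rw [this]; exact t_mem
      | E i =>
          have : i = 0 := by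
            have := i.isLt; exact Fin.ext (by omega)
          rw [this]; exact e_mem
  | mul a b ha hb =>
      rw [map_mul]
      exact SS_le (Submodule.mul_mem_mul (ha Submodule.mem_top) (hb Submodule.mem_top))
  | add a b ha hb =>
      rw [map_add]
      exact add_mem (ha Submodule.mem_top) (hb Submodule.mem_top)

end Stmt5Aux

/-- `{1, T_1, E_1, T_1 E_1}` is a `K`-basis of `ℰ_2(u)`; in particular
`ℰ_2(u)` has dimension 4 over `K = ℂ(u)`. -/
theorem stmt5 :
    (∃ B : Module.Basis (Fin 4) K (En 2),
      B 0 = 1 ∧ B 1 = T 0 ∧ B 2 = E 0 ∧ B 3 = T 0 * E 0) ∧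
    Module.finrank K (En 2) = 4 := by
  have hspan : ⊤ ≤ Submodule.span K (Set.range Stmt5Aux.bv) := Stmt5Aux.S_top.ge
  refine ⟨⟨Module.Basis.mk Stmt5Aux.li hspan, ?_, ?_, ?_, ?_⟩, ?_⟩
  · rw [Module.Basis.mk_apply]; exact Stmt5Aux.bv0
  · rw [Module.Basis.mk_apply]; exact Stmt5Aux.bv1
  · rw [Module.Basis.mk_apply]; exact Stmt5Aux.bv2
  · rw [Module.Basis.mk_apply]; exact Stmt5Aux.bv3
  · rw [Module.finrank_eq_card_basis (Module.Basis.mk Stmt5Aux.li hspan)]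
    simp
end
end

section
/- In ℰ_n(u), for all i, j with |i−j| = 1, writing T_k⁻¹ := T_k + (u−1)E_kT_k + (1−u)E_k, one has T_i⁻¹E_jT_i = T_jE_iT_j⁻¹. -/
noncomputable section

open FreeAlgebra

/-- The element `T_k⁻¹ := T_k + (u-1) E_k T_k + (1-u) E_k`, which is a two-sided
inverse of `T_k` in `ℰ_n(u)`. -/
def Tinv {n : ℕ} (k : Fin (n - 1)) : En n :=
  T k + (u - 1) • (E k * T k) + (1 - u) • E k

lemma quot_rel {n : ℕ} {a b : FA n} (h : EnRel n a b) :
    RingQuot.mkAlgHom K (EnRel n) a = RingQuot.mkAlgHom K (EnRel n) b :=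
  RingQuot.mkAlgHom_rel K h

lemma hET {n : ℕ} (k : Fin (n - 1)) : E k * T k = T k * E k := by
  simpa [T, E, map_mul] using quot_rel (EnRel.ET k)

lemma hEE {n : ℕ} (k : Fin (n - 1)) : E k * E k = E k := by
  simpa [E, map_mul] using quot_rel (EnRel.Eidem k)

lemma hT2 {n : ℕ} (k : Fin (n - 1)) :
    T k * T k = 1 + (u⁻¹ - 1) • (E k * (1 - T k)) := by
  simpa [T, E, map_mul, map_add, map_sub, map_one, map_smul] using quot_rel (EnRel.Tsq k)

lemma hETT {n : ℕ} {i j : Fin (n - 1)} (h : Nat.dist i j = 1) :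
    E j * (T i * T j) = T i * T j * E i := by
  simpa [T, E, map_mul] using quot_rel (EnRel.ETT h)

lemma hu : (u : K) ≠ 0 := RatFunc.X_ne_zero

lemma rearr {M : Type} [AddCommGroup M] (o p q r s t v : M) :
    o + (p - s) + (q + (r - t)) + v = o + (p + q + r) + (v - s - t) := by abel

lemma collect {R : Type} [Ring R] [Module K R] (a b c d : K) (x y : R)
    (h1 : a + b + c = 0) (h2 : d - a - c = 0) :
    1 + (a • x - a • y) + (b • x + (c • x - c • y)) + d • y = 1 := by
  have e : 1 + (a • x - a • y) + (b • x + (c • x - c • y)) + d • y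
      = 1 + (a + b + c) • x + (d - a - c) • y := by
    conv_rhs => rw [add_smul, add_smul, sub_smul, sub_smul]
    exact rearr (M := R) _ _ _ _ _ _ _
  rw [e, h1, h2, zero_smul, zero_smul, add_zero, add_zero]

set_option maxHeartbeats 1000000 in
lemma T_mul_Tinv {n : ℕ} (k : Fin (n - 1)) : T k * Tinv k = 1 := by
  have h1 : T k * (E k * T k) = E k * (T k * T k) := by
    rw [← mul_assoc, ← hET k, mul_assoc]
  rw [Tinv, mul_add, mul_add, mul_smul_comm, mul_smul_comm, h1, ← hET k, hT2 k,
    mul_sub, mul_one]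
  simp only [mul_add, mul_sub, mul_one, smul_add, smul_sub, smul_smul, mul_smul_comm,
    smul_mul_assoc, one_mul, ← mul_assoc, hEE, hET]
  rw [mul_assoc (T k), hEE]
  have hu0 : (u : K) ≠ 0 := hu
  have c1 : (u⁻¹ - 1) + (u - 1) + ((u - 1) * u⁻¹ - (u - 1)) = (0 : K) := by
    field_simp
    try ring
  have c2 : (1 - u) - (u⁻¹ - 1) - ((u - 1) * u⁻¹ - (u - 1)) = (0 : K) := by
    field_simp
    try ring
  exact collect _ _ _ _ _ _ c1 c2

set_option maxHeartbeats 1000000 in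
lemma Tinv_mul {n : ℕ} (k : Fin (n - 1)) : Tinv k * T k = 1 := by
  have h1 : E k * T k * T k = E k * (T k * T k) := mul_assoc _ _ _
  rw [Tinv, add_mul, add_mul, smul_mul_assoc, smul_mul_assoc, h1, hET k, hT2 k,
    mul_sub, mul_one]
  simp only [mul_add, mul_sub, mul_one, smul_add, smul_sub, smul_smul, mul_smul_comm,
    smul_mul_assoc, one_mul, ← mul_assoc, hEE, hET]
  rw [mul_assoc (T k), hEE]
  have hu0 : (u : K) ≠ 0 := hu
  have c1 : (u⁻¹ - 1) + (u - 1) + ((u - 1) * u⁻¹ - (u - 1)) = (0 : K) := by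
    field_simp
    try ring
  have c2 : (1 - u) - (u⁻¹ - 1) - ((u - 1) * u⁻¹ - (u - 1)) = (0 : K) := by
    field_simp
    try ring
  exact collect _ _ _ _ _ _ c1 c2

/-- For `|i - j| = 1`: `T_i⁻¹ E_j T_i = T_j E_i T_j⁻¹`. -/
theorem stmt8 (n : ℕ) (hn : 2 ≤ n) (i j : Fin (n - 1)) (hij : Nat.dist i j = 1) :
    Tinv i * E j * T i = T j * E i * Tinv j := by
  have key : T i * (Tinv i * E j * T i) * T j = T i * (T j * E i * Tinv j) * T j := by
    have l : T i * (Tinv i * E j * T i) * T j = E j * (T i * T j) := by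
      calc T i * (Tinv i * E j * T i) * T j
          = (T i * Tinv i) * (E j * (T i * T j)) := by noncomm_ring
        _ = E j * (T i * T j) := by rw [T_mul_Tinv]; noncomm_ring
    have r : T i * (T j * E i * Tinv j) * T j = T i * T j * E i := by
      calc T i * (T j * E i * Tinv j) * T j
          = (T i * T j * E i) * (Tinv j * T j) := by noncomm_ring
        _ = T i * T j * E i := by rw [Tinv_mul]; noncomm_ring
    rw [l, r, hETT hij]
  calc Tinv i * E j * T i
      = Tinv i * (T i * (Tinv i * E j * T i) * T j) * Tinv j := by
        rw [show T i * (Tinv i * E j * T i) * T j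
            = (T i * Tinv i) * (E j * T i) * T j by noncomm_ring, T_mul_Tinv]
        rw [show Tinv i * (1 * (E j * T i) * T j) * Tinv j
            = (Tinv i * E j * T i) * (T j * Tinv j) by noncomm_ring, T_mul_Tinv, mul_one]
    _ = Tinv i * (T i * (T j * E i * Tinv j) * T j) * Tinv j := by rw [key]
    _ = T j * E i * Tinv j := by
        rw [show Tinv i * (T i * (T j * E i * Tinv j) * T j) * Tinv j
            = (Tinv i * T i) * ((T j * E i) * ((Tinv j * T j) * Tinv j)) by noncomm_ring,
          Tinv_mul, Tinv_mul]
        noncomm_ring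
end
end

section
/- In ℰ_n(u), for all i, j with |i−j| = 1, one has u(T_iE_jT_i − T_jE_iT_j) = (u−1)(E_jT_iE_j − E_iT_jE_i). -/
noncomputable section

open FreeAlgebra

/-- For `|i - j| = 1`:
`u (T_i E_j T_i - T_j E_i T_j) = (u-1)(E_j T_i E_j - E_i T_j E_i)`. -/
theorem stmt10 (n : ℕ) (hn : 2 ≤ n) (i j : Fin (n - 1)) (hij : Nat.dist i j = 1) :
    u • (T i * E j * T i - T j * E i * T j) =
      (u - 1) • (E j * T i * E j - E i * T j * E i) := by

  have hji : Nat.dist j i = 1 := by rwa [Nat.dist_comm]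
  have hu : (u : K) ≠ 0 := RatFunc.X_ne_zero
  have mkT : ∀ k : Fin (n-1), RingQuot.mkAlgHom K (EnRel n) (fT k) = T k := fun k => rfl
  have mkE : ∀ k : Fin (n-1), RingQuot.mkAlgHom K (EnRel n) (fE k) = E k := fun k => rfl
  have hee : E i * E i = E i := by
    simpa only [map_mul, mkE] using RingQuot.mkAlgHom_rel K (EnRel.Eidem (n := n) i)
  have hff : E j * E j = E j := by
    simpa only [map_mul, mkE] using RingQuot.mkAlgHom_rel K (EnRel.Eidem (n := n) j)
  have hef : E i * E j = E j * E i := by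
    simpa only [map_mul, mkE] using RingQuot.mkAlgHom_rel K (EnRel.EE (n := n) i j)
  have hea : E i * T i = T i * E i := by
    simpa only [map_mul, mkE, mkT] using RingQuot.mkAlgHom_rel K (EnRel.ET (n := n) i)
  have hfb : E j * T j = T j * E j := by
    simpa only [map_mul, mkE, mkT] using RingQuot.mkAlgHom_rel K (EnRel.ET (n := n) j)
  have hETT : E j * (T i * T j) = T i * (T j * E i) := by
    simpa only [map_mul, mkE, mkT, mul_assoc] using
      RingQuot.mkAlgHom_rel K (EnRel.ETT (n := n) hij)
  have hEBE : E i * (T j * E i) = T j * (E i * E j) := by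
    simpa only [map_mul, mkE, mkT, mul_assoc] using
      RingQuot.mkAlgHom_rel K (EnRel.ETE (n := n) hij)
  have hFAF : E j * (T i * E j) = T i * (E j * E i) := by
    simpa only [map_mul, mkE, mkT, mul_assoc] using
      RingQuot.mkAlgHom_rel K (EnRel.ETE (n := n) hji)
  have hEET : E i * (E j * T j) = E i * (T j * E i) := by
    simpa only [map_mul, mkE, mkT, mul_assoc] using
      RingQuot.mkAlgHom_rel K (EnRel.EET (n := n) hij)
  have haa0 : T i * T i = 1 + (u⁻¹ - 1) • (E i * (1 - T i)) := by
    simpa only [map_mul, map_add, map_sub, map_one, map_smul, mkE, mkT] using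
      RingQuot.mkAlgHom_rel K (EnRel.Tsq (n := n) i)
  have hbb0 : T j * T j = 1 + (u⁻¹ - 1) • (E j * (1 - T j)) := by
    simpa only [map_mul, map_add, map_sub, map_one, map_smul, mkE, mkT] using
      RingQuot.mkAlgHom_rel K (EnRel.Tsq (n := n) j)
  have haa : T i * T i = 1 + (u⁻¹ - 1) • E i - (u⁻¹ - 1) • (E i * T i) := by
    rw [haa0, mul_one_sub, smul_sub, add_sub_assoc]
  have hbb : T j * T j = 1 + (u⁻¹ - 1) • E j - (u⁻¹ - 1) • (E j * T j) := by
    rw [hbb0, mul_one_sub, smul_sub, add_sub_assoc]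
  have hAA : ∀ x : En n, T i * (T i * x)
      = x + (u⁻¹ - 1) • (E i * x) - (u⁻¹ - 1) • (E i * (T i * x)) := by
    intro x
    rw [← mul_assoc (T i) (T i) x, haa, sub_mul, add_mul, one_mul, smul_mul_assoc,
      smul_mul_assoc, mul_assoc (E i) (T i) x]
  have hBB : ∀ x : En n, T j * (T j * x)
      = x + (u⁻¹ - 1) • (E j * x) - (u⁻¹ - 1) • (E j * (T j * x)) := by
    intro x
    rw [← mul_assoc (T j) (T j) x, hbb, sub_mul, add_mul, one_mul, smul_mul_assoc,
      smul_mul_assoc, mul_assoc (E j) (T j) x]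
  have hfef : E j * (E i * E j) = E i * E j := by
    rw [hef, ← mul_assoc, hff]
  have heef : E i * (E i * E j) = E i * E j := by rw [← mul_assoc, hee]
  have hNb : E i * (E j * T j) = T j * (E i * E j) := hEET.trans hEBE
  have heaf : ∀ x : En n, E i * (T i * x) = T i * (E i * x) := fun x => by
    rw [← mul_assoc, hea, mul_assoc]
  have hEBEf : E i * (T j * (E i * E j)) = T j * (E i * E j) := by
    have h1 : E i * (T j * (E i * E j)) = (E i * (T j * E i)) * E j := by
      simp only [mul_assoc]
    rw [h1, hEBE, mul_assoc, mul_assoc, hff]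
  have hfbf : E j * (T j * (E i * E j)) = T j * (E i * E j) := by
    rw [← mul_assoc (E j) (T j) (E i * E j), hfb, mul_assoc (T j) (E j) (E i * E j), hfef]
  have hETTf : E j * (T i * (T j * E j)) = T i * (T j * (E i * E j)) := by
    have h1 : E j * (T i * (T j * E j)) = (E j * (T i * T j)) * E j := by
      simp only [mul_assoc]
    rw [h1, hETT, mul_assoc, mul_assoc]
  have hAAN : T i * (T i * (E i * E j))
      = E i * E j + (u⁻¹ - 1) • (E i * E j) - (u⁻¹ - 1) • (T i * (E i * E j)) := by
    rw [hAA, heef, heaf, heef]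
  have hAAbN : T i * (T i * (T j * (E i * E j)))
      = T j * (E i * E j) + (u⁻¹ - 1) • (T j * (E i * E j))
        - (u⁻¹ - 1) • (T i * (T j * (E i * E j))) := by
    rw [hAA, hEBEf, heaf, hEBEf]
  have hBBN : T j * (T j * (E i * E j))
      = E i * E j + (u⁻¹ - 1) • (E i * E j) - (u⁻¹ - 1) • (T j * (E i * E j)) := by
    rw [hBB, hfef, hfbf]
  have SA : T i * (E j * (T i * T j))
      = T j * E i + (u⁻¹ - 1) • (T j * (E i * E j))
        - (u⁻¹ - 1) • (T i * (T j * (E i * E j))) := by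
    rw [hETT, hAA, hEBE, heaf, hEBE]
  have hR : T i * (E j * (T i * (T j * T j)))
      = T j * (E i * T j)
        + (u⁻¹ - 1) • (E i * E j + (u⁻¹ - 1) • (E i * E j)
            - (u⁻¹ - 1) • (T j * (E i * E j)))
        - (u⁻¹ - 1) • (T i * (E i * E j) + (u⁻¹ - 1) • (T i * (E i * E j))
            - (u⁻¹ - 1) • (T i * (T j * (E i * E j)))) := by
    have h1 : T i * (E j * (T i * (T j * T j))) = (T i * (E j * (T i * T j))) * T j := by
      simp only [mul_assoc]
    rw [h1, SA, sub_mul, add_mul, smul_mul_assoc, smul_mul_assoc,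
      mul_assoc (T j) (E i) (T j),
      mul_assoc (T i) (T j * (E i * E j)) (T j),
      mul_assoc (T j) (E i * E j) (T j),
      mul_assoc (E i) (E j) (T j),
      hNb, hBBN, mul_sub, mul_add, mul_smul_comm, mul_smul_comm]
  have hL : T i * (E j * (T i * (T j * T j)))
      = T i * (E j * T i)
        + (u⁻¹ - 1) • (E i * E j + (u⁻¹ - 1) • (E i * E j)
            - (u⁻¹ - 1) • (T i * (E i * E j)))
        - (u⁻¹ - 1) • (T j * (E i * E j) + (u⁻¹ - 1) • (T j * (E i * E j))
            - (u⁻¹ - 1) • (T i * (T j * (E i * E j)))) := by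
    rw [hbb]
    simp only [mul_add, mul_sub, mul_one, mul_smul_comm]
    rw [hFAF, ← hef, hAAN, hfb, hETTf, hAAbN]
  have h := hL.symm.trans hR
  have h0 := sub_eq_zero_of_eq h
  have h2 : T i * (E j * T i) - (u⁻¹ - 1) • (T j * (E i * E j))
      = T j * (E i * T j) - (u⁻¹ - 1) • (T i * (E i * E j)) := by
    rw [← sub_eq_zero, ← h0]
    simp only [smul_add, smul_sub, smul_smul]
    abel
  have h3 := congrArg (fun z : En n => u • z) h2
  simp only [smul_sub, smul_smul] at h3
  have hc : u * (u⁻¹ - 1) = -(u - 1) := by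
    rw [mul_sub, mul_inv_cancel₀ hu, mul_one, neg_sub]
  rw [hc] at h3
  simp only [neg_smul, sub_neg_eq_add] at h3
  simp only [mul_assoc]
  rw [hFAF, ← hef, hEBE, smul_sub, smul_sub, ← sub_eq_zero, ← sub_eq_zero_of_eq h3]
  abel
end
end

section
/- In ℰ_n(u), for all i, j with |i−j| = 1, one has T_iT_jE_jT_i = T_jT_iE_iT_j. -/
noncomputable section

open FreeAlgebra

namespace EnAux
variable {n : ℕ}

lemma ET0 (k : Fin (n-1)) : E k * T k = T k * E k := by
  simpa only [E, T, map_mul] using RingQuot.mkAlgHom_rel K (EnRel.ET k)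

lemma ETc (k : Fin (n-1)) (x : En n) : E k * (T k * x) = T k * (E k * x) := by
  rw [← mul_assoc, ← mul_assoc, ET0]

lemma Eidem0 (k : Fin (n-1)) : E k * E k = E k := by
  simpa only [E, map_mul] using RingQuot.mkAlgHom_rel K (EnRel.Eidem k)

lemma EE0 (k l : Fin (n-1)) : E k * E l = E l * E k := by
  simpa only [E, map_mul] using RingQuot.mkAlgHom_rel K (EnRel.EE k l)

lemma Tsq0 (k : Fin (n-1)) :
    T k * T k = 1 + (u⁻¹ - 1) • (E k * (1 - T k)) := by
  simpa only [E, T, map_mul, map_add, map_one, map_smul, map_sub] using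
    RingQuot.mkAlgHom_rel K (EnRel.Tsq k)

variable {i j : Fin (n-1)}

lemma braidL (h : Nat.dist i j = 1) : T i * T j * T i = T j * T i * T j := by
  simpa only [T, map_mul] using RingQuot.mkAlgHom_rel K (EnRel.braid h)

lemma braid0 (h : Nat.dist i j = 1) : T i * (T j * T i) = T j * (T i * T j) := by
  simpa only [mul_assoc] using braidL h

lemma braidc (h : Nat.dist i j = 1) (x : En n) :
    T i * (T j * (T i * x)) = T j * (T i * (T j * x)) := by
  simp only [← mul_assoc]; rw [braidL h]

lemma ETTL (h : Nat.dist i j = 1) : E j * T i * T j = T i * T j * E i := by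
  have := RingQuot.mkAlgHom_rel K (EnRel.ETT h)
  simp only [E, T, map_mul] at this
  rw [mul_assoc]; exact this

lemma ETTc (h : Nat.dist i j = 1) (x : En n) :
    E j * (T i * (T j * x)) = T i * (T j * (E i * x)) := by
  simp only [← mul_assoc]; rw [ETTL h]

lemma EETE (h : Nat.dist i j = 1) : E i * (E j * T j) = T j * (E j * E i) := by
  have h1 : E i * E j * T j = E i * T j * E i := by
    simpa only [E, T, map_mul] using RingQuot.mkAlgHom_rel K (EnRel.EET h)
  have h2 : E i * T j * E i = T j * (E i * E j) := by
    simpa only [E, T, map_mul] using RingQuot.mkAlgHom_rel K (EnRel.ETE h)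
  rw [← mul_assoc, h1, h2, EE0]

end EnAux

open EnAux

/-- For `|i - j| = 1`: `T_i T_j E_j T_i = T_j T_i E_i T_j`. -/
theorem stmt11 (n : ℕ) (hn : 2 ≤ n) (i j : Fin (n - 1)) (hij : Nat.dist i j = 1) :
    T i * T j * E j * T i = T j * T i * E i * T j := by
  have hji : Nat.dist (j : ℕ) (i : ℕ) = 1 := by rwa [Nat.dist_comm]
  have hXT : (T i * T j * E j * T i) * T j
      = T j * (T i * E i) + (u⁻¹ - 1) • (T j * (T i * (E j * E i)))
        - (u⁻¹ - 1) • (T j * (T i * (T j * (E j * E i)))) := by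
    calc (T i * T j * E j * T i) * T j
        = T i * (T j * (E j * (T i * T j))) := by simp only [mul_assoc]
      _ = T i * (E j * (T j * (T i * T j))) := by rw [← ETc]
      _ = T i * (E j * (T i * (T j * T i))) := by rw [← braid0 hij]
      _ = T i * (T i * (T j * (E i * T i))) := by rw [ETTc hij]
      _ = T i * (T i * (T j * (T i * E i))) := by rw [ET0 i]
      _ = (T i * T i) * (T j * (T i * E i)) := by simp only [← mul_assoc]
      _ = (1 + (u⁻¹ - 1) • (E i * (1 - T i))) * (T j * (T i * E i)) := by rw [Tsq0 i]
      _ = T j * (T i * E i) + (u⁻¹ - 1) • (E i * (T j * (T i * E i)))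
            - (u⁻¹ - 1) • (E i * (T i * (T j * (T i * E i)))) := by
          simp only [add_mul, sub_mul, mul_sub, one_mul, smul_mul_assoc, smul_sub, mul_assoc]
          rw [← add_sub_assoc]
      _ = T j * (T i * E i) + (u⁻¹ - 1) • (T j * (T i * (E j * E i)))
            - (u⁻¹ - 1) • (E i * (T i * (T j * (T i * E i)))) := by rw [ETTc hji]
      _ = T j * (T i * E i) + (u⁻¹ - 1) • (T j * (T i * (E j * E i)))
            - (u⁻¹ - 1) • (T j * (T i * (T j * (E j * E i)))) := by
          rw [ETc i, ETTc hji, braidc hij]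
  have hYT : (T j * T i * E i * T j) * T j
      = T j * (T i * E i) + (u⁻¹ - 1) • (T j * (T i * (E j * E i)))
        - (u⁻¹ - 1) • (T j * (T i * (T j * (E j * E i)))) := by
    calc (T j * T i * E i * T j) * T j
        = T j * (T i * (E i * (T j * T j))) := by simp only [mul_assoc]
      _ = T j * (T i * (E i * (1 + (u⁻¹ - 1) • (E j * (1 - T j))))) := by rw [Tsq0 j]
      _ = T j * (T i * E i) + (u⁻¹ - 1) • (T j * (T i * (E i * E j)))
            - (u⁻¹ - 1) • (T j * (T i * (E i * (E j * T j)))) := by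
          simp only [mul_add, mul_one, mul_sub, mul_smul_comm, smul_sub, mul_assoc]
          rw [← add_sub_assoc]
      _ = T j * (T i * E i) + (u⁻¹ - 1) • (T j * (T i * (E j * E i)))
            - (u⁻¹ - 1) • (T j * (T i * (T j * (E j * E i)))) := by
          rw [EE0 i j, EETE hij]
  have hEjTT : E j * (T j * T j)
      = E j + (u⁻¹ - 1) • E j - (u⁻¹ - 1) • (E j * T j) := by
    rw [Tsq0 j]
    simp only [mul_add, mul_one, mul_smul_comm, mul_sub, smul_sub]
    rw [← mul_assoc (E j) (E j) (T j), Eidem0, ← add_sub_assoc]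
  have hu0 : (u : K) ≠ 0 := RatFunc.X_ne_zero
  have hV : T j * (T j + (1 - u) • (E j * (1 - T j))) = 1 := by
    calc T j * (T j + (1 - u) • (E j * (1 - T j)))
        = T j * T j + (1 - u) • (T j * (E j * (1 - T j))) := by
          simp only [mul_add, mul_smul_comm]
      _ = T j * T j + (1 - u) • (E j * (T j * (1 - T j))) := by rw [← ETc]
      _ = T j * T j + (1 - u) • (E j * T j) - (1 - u) • (E j * (T j * T j)) := by
          simp only [mul_sub, mul_one, smul_sub]
          rw [← add_sub_assoc]
      _ = (1 + (u⁻¹ - 1) • (E j * (1 - T j))) + (1 - u) • (E j * T j)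
            - (1 - u) • (E j + (u⁻¹ - 1) • E j - (u⁻¹ - 1) • (E j * T j)) := by
          rw [hEjTT, Tsq0 j]
      _ = 1 := by
          have hc : (1 - u) * u⁻¹ = u⁻¹ - 1 := by
            rw [sub_mul, one_mul, mul_inv_cancel₀ hu0]
          simp only [mul_sub, mul_one, smul_sub, smul_add, smul_smul, hc]
          generalize (u⁻¹ - 1 : K) = a
          generalize (1 - u : K) = c
          simp only [sub_smul]
          abel
  calc T i * T j * E j * T i
      = (T i * T j * E j * T i) * 1 := (mul_one _).symm
    _ = (T i * T j * E j * T i) * (T j * (T j + (1 - u) • (E j * (1 - T j)))) := by rw [hV]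
    _ = ((T i * T j * E j * T i) * T j) * (T j + (1 - u) • (E j * (1 - T j))) := by
        rw [← mul_assoc]
    _ = ((T j * T i * E i * T j) * T j) * (T j + (1 - u) • (E j * (1 - T j))) := by
        rw [hXT, ← hYT]
    _ = (T j * T i * E i * T j) * (T j * (T j + (1 - u) • (E j * (1 - T j)))) := by
        rw [mul_assoc]
    _ = T j * T i * E i * T j := by rw [hV, mul_one]
end
end

section
/- In ℰ_n(u), for all i, j with |i−j| = 1, writing T_k⁻¹ := T_k + (u−1)E_kT_k + (1−u)E_k, one has E_jT_i⁻¹T_j = T_i⁻¹T_jE_i. -/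
noncomputable section

open FreeAlgebra

/-- For `|i - j| = 1`: `E_j T_i⁻¹ T_j = T_i⁻¹ T_j E_i`. -/
theorem stmt12 (n : ℕ) (hn : 2 ≤ n) (i j : Fin (n - 1)) (hij : Nat.dist i j = 1) :
    E j * (Tinv i * T j) = Tinv i * T j * E i := by
  have rel : ∀ {a b : FA n}, EnRel n a b →
      RingQuot.mkAlgHom K (EnRel n) a = RingQuot.mkAlgHom K (EnRel n) b :=
    fun h => RingQuot.mkAlgHom_rel K h
  have hETT : E j * (T i * T j) = T i * T j * E i := by
    simpa [T, E, map_mul, mul_assoc] using rel (EnRel.ETT hij)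
  have hEE : E j * E i = E i * E j := by
    simpa [E, map_mul] using rel (EnRel.EE j i)
  have hEET : E i * (E j * T j) = E i * (T j * E i) := by
    simpa [T, E, map_mul, mul_assoc] using rel (EnRel.EET hij)
  have h2 : E j * (E i * (T i * T j)) = E i * (T i * T j) * E i := by
    calc E j * (E i * (T i * T j)) = E j * E i * (T i * T j) := by
          rw [mul_assoc]
      _ = E i * (E j * (T i * T j)) := by rw [hEE, mul_assoc]
      _ = E i * (T i * T j * E i) := by rw [hETT]
      _ = E i * (T i * T j) * E i := by simp [mul_assoc]
  have h3 : E j * (E i * T j) = E i * T j * E i := by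
    calc E j * (E i * T j) = E j * E i * T j := by rw [mul_assoc]
      _ = E i * (E j * T j) := by rw [hEE, mul_assoc]
      _ = E i * (T j * E i) := hEET
      _ = E i * T j * E i := by rw [mul_assoc]
  simp only [Tinv, add_mul, smul_mul_assoc, mul_add, mul_smul_comm]
  rw [mul_assoc (E i) (T i) (T j), hETT, h2, h3]
end
end

section
/- Let a, b ≥ 0 with a + b = n, let α be a representation of S_a on a ℂ-vector space V and β a representation of S_b on a ℂ-vector space V′. Let M_{(α,β)} = Ind_{W_{(a,b)}}^{W_n}(α ⊗ εβ) be the induced W_n-representation, realized as the space of functions f: W_n → V ⊗ V′ satisfying f(hg) = (α ⊗ εβ)(h)·f(g) for all h ∈ W_{(a,b)}, g ∈ W_n, with action (g·f)(x) = f(xg), and let M_{(β,α)} = Ind_{W_{(b,a)}}^{W_n}(β ⊗ εα) be defined analogously. Then there exists a ℂ-linear equivalence Φ: M_{(α,β)} → M_{(β,α)} that intertwines the actions of all the elements s_i and e_i := ½(1 + t_it_{i+1}) of ℂ[W_n], i.e. Φ(s_i·f) = s_i·Φ(f) and Φ(e_i·f) = e_i·Φ(f) for all i and all f; in other words, M_{(α,β)}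 and M_{(β,α)} are isomorphic as ℰ_n(1)-modules. -/
noncomputable section
set_option maxRecDepth 4000

/-- `C_2^n`, written multiplicatively. -/
abbrev C2n (n : ℕ) : Type := Fin n → Multiplicative (ZMod 2)

/-- The permutation action of `S_n` on `C_2^n` by permuting coordinates. -/
def permAct (n : ℕ) : Equiv.Perm (Fin n) →* MulAut (C2n n) where
  toFun σ :=
    { toFun := fun v i => v (σ⁻¹ i)
      invFun := fun v i => v (σ i)
      left_inv := fun v => funext fun i => by simp
      right_inv := fun v => funext fun i => by simp
      map_mul' := fun v w => rfl }
  map_one' := by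
    ext v i
    simp
  map_mul' := fun σ τ => by
    ext v i
    simp [mul_inv_rev]

/-- The hyperoctahedral group `W_n = C_2 ≀ S_n`, realized as the semidirect
product `(ZMod 2)^n ⋊ S_n`. -/
abbrev W (n : ℕ) : Type := C2n n ⋊[permAct n] Equiv.Perm (Fin n)

/-- The element `t_i` of `W_n`: `i`-th standard basis vector, trivial permutation. -/
def tgen (n : ℕ) (i : Fin n) : W n :=
  SemidirectProduct.inl (fun j => if j = i then Multiplicative.ofAdd 1 else 1)

/-- The element `s_i` of `W_n`: the adjacent transposition `(i, i+1)`, trivial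
vector part. -/
def sgen (n : ℕ) (i : ℕ) (h : i + 1 < n) : W n :=
  SemidirectProduct.inr (Equiv.swap ⟨i, by omega⟩ ⟨i + 1, h⟩)

open TensorProduct

/-- The identification `Fin a ⊕ Fin b ≃ Fin n` (blocks `{1,…,a}` and `{a+1,…,n}`). -/
def bEquiv {a b n : ℕ} (h : a + b = n) : (Fin a ⊕ Fin b) ≃ Fin n :=
  finSumFinEquiv.trans (finCongr h)

/-- The element of the subgroup `W_{(a,b)} ⊆ W_n` with vector part `c` and
block-diagonal permutation part `(σ₁, σ₂)`. -/
def blockElem {a b n : ℕ} (h : a + b = n) (c : C2n n)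
    (σ₁ : Equiv.Perm (Fin a)) (σ₂ : Equiv.Perm (Fin b)) : W n :=
  SemidirectProduct.inl c *
    SemidirectProduct.inr ((bEquiv h).permCongr (σ₁.sumCongr σ₂))

/-- The sign `ε(c) = (-1)^(c_{a+1} + ⋯ + c_n)` (sum over the second block). -/
def bsign {a b n : ℕ} (h : a + b = n) (c : C2n n) : ℂ :=
  (-1 : ℂ) ^ (∑ j : Fin b, (Multiplicative.toAdd (c (bEquiv h (Sum.inr j)))).val)

/-- The induced module `Ind_{W_{(a,b)}}^{W_n} (α ⊗ εβ)`, realized as the space of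
functions `f : W_n → V ⊗ V'` with `f(hg) = (α ⊗ εβ)(h) f(g)` for `h ∈ W_{(a,b)}`. -/
def Ind {a b n : ℕ} (h : a + b = n) {V V' : Type} [AddCommGroup V] [Module ℂ V]
    [AddCommGroup V'] [Module ℂ V']
    (α : Representation ℂ (Equiv.Perm (Fin a)) V)
    (β : Representation ℂ (Equiv.Perm (Fin b)) V') :
    Submodule ℂ (W n → V ⊗[ℂ] V') where
  carrier := {f | ∀ (c : C2n n) (σ₁ : Equiv.Perm (Fin a)) (σ₂ : Equiv.Perm (Fin b))
      (g : W n),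
      f (blockElem h c σ₁ σ₂ * g) =
        bsign h c • TensorProduct.map (α σ₁) (β σ₂) (f g)}
  add_mem' := by
    intro f g hf hg c σ₁ σ₂ x
    simp only [Pi.add_apply, hf c σ₁ σ₂ x, hg c σ₁ σ₂ x, map_add, smul_add]
  zero_mem' := by
    intro c σ₁ σ₂ x
    show (0 : V ⊗[ℂ] V') = bsign h c • TensorProduct.map (α σ₁) (β σ₂) 0
    rw [map_zero, smul_zero]
  smul_mem' := by
    intro r f hf c σ₁ σ₂ x
    show r • f (blockElem h c σ₁ σ₂ * x) =
      bsign h c • TensorProduct.map (α σ₁) (β σ₂) (r • f x)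
    rw [hf c σ₁ σ₂ x, map_smul, smul_comm]

/-- Right translation by `w ∈ W_n` on the induced module: `(w ⬝ f)(x) = f(xw)`.
This is the action of the group element `w` on the induced representation. -/
def rT {a b n : ℕ} (h : a + b = n) {V V' : Type} [AddCommGroup V] [Module ℂ V]
    [AddCommGroup V'] [Module ℂ V']
    (α : Representation ℂ (Equiv.Perm (Fin a)) V)
    (β : Representation ℂ (Equiv.Perm (Fin b)) V') (w : W n) :
    ↥(Ind h α β) →ₗ[ℂ] ↥(Ind h α β) where
  toFun f := ⟨fun x => f.1 (x * w), by
    intro c σ₁ σ₂ x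
    show f.1 (blockElem h c σ₁ σ₂ * x * w) = _
    rw [mul_assoc]
    exact f.2 c σ₁ σ₂ (x * w)⟩
  map_add' f g := rfl
  map_smul' r f := rfl

namespace Stmt16Aux

open TensorProduct SemidirectProduct

def chi (x : Multiplicative (ZMod 2)) : ℂ :=
  if Multiplicative.toAdd x = 0 then 1 else -1

lemma zmod2_cases : ∀ z : ZMod 2, z = 0 ∨ z = 1 := by decide

lemma chi_one : chi 1 = 1 := by simp [chi]

lemma chi_mul (x y : Multiplicative (ZMod 2)) : chi (x * y) = chi x * chi y := by
  rcases zmod2_cases (Multiplicative.toAdd x) with hx | hx <;>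
    rcases zmod2_cases (Multiplicative.toAdd y) with hy | hy <;>
      simp [chi, toAdd_mul, hx, hy, (by decide : (1 : ZMod 2) + 1 = 0)]

lemma chi_sq (x : Multiplicative (ZMod 2)) : chi x * chi x = 1 := by
  rcases zmod2_cases (Multiplicative.toAdd x) with hx | hx <;> simp [chi, hx]

lemma pow_val (z : Multiplicative (ZMod 2)) :
    (-1 : ℂ) ^ (Multiplicative.toAdd z).val = chi z := by
  rcases zmod2_cases (Multiplicative.toAdd z) with hz | hz <;>
    simp [chi, hz, (by decide : ((0:ZMod 2)).val = 0), (by decide : ((1:ZMod 2)).val = 1)]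

def Fsgn {n : ℕ} (c : C2n n) : ℂ := ∏ i, chi (c i)

lemma Fsgn_mul {n : ℕ} (c d : C2n n) : Fsgn (c * d) = Fsgn c * Fsgn d := by
  simp [Fsgn, chi_mul, Finset.prod_mul_distrib]

lemma Fsgn_one {n : ℕ} : Fsgn (1 : C2n n) = 1 := by simp [Fsgn, chi_one]

lemma Fsgn_sq {n : ℕ} (c : C2n n) : Fsgn c * Fsgn c = 1 := by
  rw [Fsgn, ← Finset.prod_mul_distrib]
  simp [chi_sq]

lemma Fsgn_comp {n : ℕ} (c : C2n n) (σ : Equiv.Perm (Fin n)) :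
    Fsgn (fun i => c (σ i)) = Fsgn c := by
  simpa [Fsgn] using Equiv.prod_comp σ (fun i => chi (c i))

lemma Fsgn_permAct {n : ℕ} (σ : Equiv.Perm (Fin n)) (c : C2n n) :
    Fsgn (permAct n σ c) = Fsgn c := Fsgn_comp c σ⁻¹

lemma bsign_eq_prod {a b n : ℕ} (h : a + b = n) (c : C2n n) :
    bsign h c = ∏ j : Fin b, chi (c (bEquiv h (Sum.inr j))) := by
  rw [bsign, ← Finset.prod_pow_eq_pow_sum]
  exact Finset.prod_congr rfl fun j _ => pow_val _

/-- The block-swapping permutation. -/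
def tau {a b n : ℕ} (hab : a + b = n) (hba : b + a = n) : Equiv.Perm (Fin n) :=
  (bEquiv hba).symm.trans ((Equiv.sumComm (Fin b) (Fin a)).trans (bEquiv hab))

lemma tau_mul_tau {a b n : ℕ} (hab : a + b = n) (hba : b + a = n) :
    tau hab hba * tau hba hab = 1 := by
  ext i
  simp [tau, Equiv.Perm.mul_apply]

lemma Fsgn_bsign {a b n : ℕ} (hab : a + b = n) (hba : b + a = n) (c : C2n n) :
    Fsgn c * bsign hab (permAct n (tau hab hba) c) = bsign hba c := by
  rw [bsign_eq_prod, bsign_eq_prod]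
  have h1 : Fsgn c = (∏ j : Fin b, chi (c (bEquiv hba (Sum.inl j)))) *
      (∏ j : Fin a, chi (c (bEquiv hba (Sum.inr j)))) := by
    rw [Fsgn, ← Equiv.prod_comp (bEquiv hba) (fun i => chi (c i)), Fintype.prod_sum_type]
  have h2 : ∀ j : Fin b, permAct n (tau hab hba) c (bEquiv hab (Sum.inr j)) =
      c (bEquiv hba (Sum.inl j)) := by
    intro j
    show c ((tau hab hba)⁻¹ (bEquiv hab (Sum.inr j))) = _
    congr 1
    rw [Equiv.Perm.inv_def, Equiv.symm_apply_eq]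
    simp [tau]
  rw [h1, Finset.prod_congr rfl fun j _ => congrArg chi (h2 j)]
  have hP : (∏ j : Fin b, chi (c (bEquiv hba (Sum.inl j)))) *
      (∏ j : Fin b, chi (c (bEquiv hba (Sum.inl j)))) = 1 := by
    rw [← Finset.prod_mul_distrib]; simp [chi_sq]
  calc (∏ j : Fin b, chi (c (bEquiv hba (Sum.inl j)))) *
        (∏ j : Fin a, chi (c (bEquiv hba (Sum.inr j)))) *
        (∏ j : Fin b, chi (c (bEquiv hba (Sum.inl j))))
      = ((∏ j : Fin b, chi (c (bEquiv hba (Sum.inl j)))) *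
         (∏ j : Fin b, chi (c (bEquiv hba (Sum.inl j))))) *
        (∏ j : Fin a, chi (c (bEquiv hba (Sum.inr j)))) := by ring
    _ = ∏ j : Fin a, chi (c (bEquiv hba (Sum.inr j))) := by rw [hP, one_mul]

lemma key_group {a b n : ℕ} (hab : a + b = n) (hba : b + a = n) (c : C2n n)
    (σ₁ : Equiv.Perm (Fin a)) (σ₂ : Equiv.Perm (Fin b)) :
    inr (tau hab hba) * blockElem hba c σ₂ σ₁ =
      blockElem hab (permAct n (tau hab hba) c) σ₁ σ₂ * inr (tau hab hba) := by
  refine SemidirectProduct.ext ?_ ?_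
  · show (1 : C2n n) * permAct n (tau hab hba) ((blockElem hba c σ₂ σ₁).left) = _
    have hl : (blockElem hba c σ₂ σ₁).left = c := by
      simp [blockElem, SemidirectProduct.mul_left]
    have hr : (blockElem hab (permAct n (tau hab hba) c) σ₁ σ₂ *
        inr (tau hab hba)).left = permAct n (tau hab hba) c := by
      simp [blockElem, SemidirectProduct.mul_left]
    rw [hl, hr, one_mul]
  · show (tau hab hba) * (blockElem hba c σ₂ σ₁).right = _
    have hl : (blockElem hba c σ₂ σ₁).right = (bEquiv hba).permCongr (σ₂.sumCongr σ₁) := by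
      simp [blockElem, SemidirectProduct.mul_right]
    have hr : (blockElem hab (permAct n (tau hab hba) c) σ₁ σ₂ *
        inr (tau hab hba)).right = (bEquiv hab).permCongr (σ₁.sumCongr σ₂) * tau hab hba := by
      simp [blockElem, SemidirectProduct.mul_right]
    rw [hl, hr]
    ext i
    obtain ⟨s, rfl⟩ := (bEquiv hba).surjective i
    cases s <;> simp [tau, Equiv.Perm.mul_apply, Equiv.permCongr_apply]

end Stmt16Aux

namespace Stmt16Aux

variable {n a b : ℕ} {V V' : Type} [AddCommGroup V] [Module ℂ V]
  [AddCommGroup V'] [Module ℂ V']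

/-- The intertwining map `f ↦ (x ↦ ε(x) • swap (f (u x)))`. -/
def psi (hab : a + b = n) (hba : b + a = n)
    (α : Representation ℂ (Equiv.Perm (Fin a)) V)
    (β : Representation ℂ (Equiv.Perm (Fin b)) V') :
    ↥(Ind hab α β) →ₗ[ℂ] ↥(Ind hba β α) where
  toFun f := ⟨fun x => Fsgn x.left •
      (TensorProduct.comm ℂ V V') (f.1 (SemidirectProduct.inr (tau hab hba) * x)), by
    intro c σ₁ σ₂ x
    have hx1 : SemidirectProduct.inr (tau hab hba) * (blockElem hba c σ₁ σ₂ * x) =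
        blockElem hab (permAct n (tau hab hba) c) σ₂ σ₁ *
          (SemidirectProduct.inr (tau hab hba) * x) := by
      rw [← mul_assoc, key_group hab hba c σ₂ σ₁, mul_assoc]
    have hx2 : (blockElem hba c σ₁ σ₂ * x).left =
        c * permAct n ((bEquiv hba).permCongr (σ₁.sumCongr σ₂)) x.left := by
      simp [blockElem, SemidirectProduct.mul_left, SemidirectProduct.mul_right]
    show Fsgn ((blockElem hba c σ₁ σ₂ * x).left) •
        (TensorProduct.comm ℂ V V')
          (f.1 (SemidirectProduct.inr (tau hab hba) * (blockElem hba c σ₁ σ₂ * x))) = _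
    rw [hx1, hx2, Fsgn_mul, Fsgn_permAct,
      f.2 (permAct n (tau hab hba) c) σ₂ σ₁ (SemidirectProduct.inr (tau hab hba) * x),
      map_smul]
    rw [show (TensorProduct.comm ℂ V V')
        (TensorProduct.map (α σ₂) (β σ₁) (f.1 (SemidirectProduct.inr (tau hab hba) * x))) =
        TensorProduct.map (β σ₁) (α σ₂)
          ((TensorProduct.comm ℂ V V') (f.1 (SemidirectProduct.inr (tau hab hba) * x)))
      from (TensorProduct.map_comm (β σ₁) (α σ₂) _).symm]
    rw [map_smul, smul_smul, smul_smul]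
    congr 1
    rw [← Fsgn_bsign hab hba c]
    ring⟩
  map_add' f g := Subtype.ext <| funext fun x => by
    simp only [Submodule.coe_add, Pi.add_apply, map_add, smul_add]
  map_smul' r f := Subtype.ext <| funext fun x => by
    simp only [SetLike.val_smul, Pi.smul_apply, map_smul, RingHom.id_apply]
    rw [smul_comm]

lemma psi_coe (hab : a + b = n) (hba : b + a = n)
    (α : Representation ℂ (Equiv.Perm (Fin a)) V)
    (β : Representation ℂ (Equiv.Perm (Fin b)) V') (f : ↥(Ind hab α β)) (x : W n) :
    (psi hab hba α β f).1 x = Fsgn x.left •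
      (TensorProduct.comm ℂ V V') (f.1 (SemidirectProduct.inr (tau hab hba) * x)) := rfl

lemma psi_psi (hab : a + b = n) (hba : b + a = n)
    (α : Representation ℂ (Equiv.Perm (Fin a)) V)
    (β : Representation ℂ (Equiv.Perm (Fin b)) V') (f : ↥(Ind hab α β)) :
    psi hba hab β α (psi hab hba α β f) = f := Subtype.ext <| funext fun x => by
  show (psi hba hab β α (psi hab hba α β f)).1 x = f.1 x
  rw [psi_coe, psi_coe]
  have h1 : (SemidirectProduct.inr (tau hba hab) * x : W n).left =
      permAct n (tau hba hab) x.left := by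
    rw [SemidirectProduct.mul_left, SemidirectProduct.left_inr, one_mul,
      SemidirectProduct.right_inr]
  have h2 : SemidirectProduct.inr (tau hab hba) *
      (SemidirectProduct.inr (tau hba hab) * x) = x := by
    rw [← mul_assoc, ← map_mul, tau_mul_tau, map_one, one_mul]
  have h3 : ∀ z : V ⊗[ℂ] V', (TensorProduct.comm ℂ V' V)
      ((TensorProduct.comm ℂ V V') z) = z := by
    intro z
    induction z using TensorProduct.induction_on with
    | zero => simp
    | tmul v w => simp
    | add u v hu hv => simp [hu, hv]
  simp only [h1, h2, Fsgn_permAct, map_smul, h3, smul_smul, Fsgn_sq, one_smul]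

lemma psi_rT (hab : a + b = n) (hba : b + a = n)
    (α : Representation ℂ (Equiv.Perm (Fin a)) V)
    (β : Representation ℂ (Equiv.Perm (Fin b)) V')
    (w : W n) (hw : Fsgn w.left = 1) (f : ↥(Ind hab α β)) :
    psi hab hba α β (rT hab α β w f) = rT hba β α w (psi hab hba α β f) :=
  Subtype.ext <| funext fun x => by
    show (psi hab hba α β (rT hab α β w f)).1 x = (psi hab hba α β f).1 (x * w)
    rw [psi_coe, psi_coe]
    show Fsgn x.left • (TensorProduct.comm ℂ V V')
        (f.1 (SemidirectProduct.inr (tau hab hba) * x * w)) =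
      Fsgn (x * w).left • (TensorProduct.comm ℂ V V')
        (f.1 (SemidirectProduct.inr (tau hab hba) * (x * w)))
    rw [← mul_assoc, SemidirectProduct.mul_left x w, Fsgn_mul, Fsgn_permAct, hw, mul_one]

end Stmt16Aux

namespace Stmt16Aux

lemma Fsgn_tvec {n : ℕ} (i : Fin n) :
    Fsgn (fun j => if j = i then Multiplicative.ofAdd (1 : ZMod 2) else 1) = -1 := by
  rw [Fsgn, show (fun j => chi (if j = i then Multiplicative.ofAdd (1 : ZMod 2) else 1)) =
      fun j => if j = i then (-1 : ℂ) else 1 from funext fun j => by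
    split <;> simp [chi, chi_one]]
  simp [Finset.prod_ite_eq']

lemma Fsgn_tt {n : ℕ} (i j : Fin n) :
    Fsgn ((tgen n i * tgen n j).left) = 1 := by
  have h : (tgen n i * tgen n j).left =
      (fun k => if k = i then Multiplicative.ofAdd (1 : ZMod 2) else 1) *
      (fun k => if k = j then Multiplicative.ofAdd (1 : ZMod 2) else 1) := by
    rw [SemidirectProduct.mul_left, show (tgen n i).right = 1 from rfl, map_one]
    rfl
  rw [h, Fsgn_mul, Fsgn_tvec, Fsgn_tvec]
  norm_num

end Stmt16Aux

/-- The induced modules `V_{(α,β)} = Ind_{W_{(a,b)}}^{W_n}(α ⊗ εβ)` and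
`V_{(β,α)} = Ind_{W_{(b,a)}}^{W_n}(β ⊗ εα)` are isomorphic as `ℰ_n(1)`-modules:
there is a `ℂ`-linear equivalence intertwining the actions of all `s_i` and all
`e_i = ½(1 + t_i t_{i+1})`. -/
theorem stmt16 (n a b : ℕ) (hab : a + b = n) (hba : b + a = n)
    {V V' : Type} [AddCommGroup V] [Module ℂ V] [AddCommGroup V'] [Module ℂ V']
    (α : Representation ℂ (Equiv.Perm (Fin a)) V)
    (β : Representation ℂ (Equiv.Perm (Fin b)) V') :
    ∃ Φ : ↥(Ind hab α β) ≃ₗ[ℂ] ↥(Ind hba β α),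
      (∀ (i : ℕ) (hi : i + 1 < n) (f : ↥(Ind hab α β)),
        Φ (rT hab α β (sgen n i hi) f) = rT hba β α (sgen n i hi) (Φ f)) ∧
      (∀ (i : ℕ) (hi : i + 1 < n) (f : ↥(Ind hab α β)),
        Φ ((2⁻¹ : ℂ) •
            (f + rT hab α β (tgen n ⟨i, by omega⟩ * tgen n ⟨i + 1, hi⟩) f)) =
          (2⁻¹ : ℂ) •
            (Φ f + rT hba β α (tgen n ⟨i, by omega⟩ * tgen n ⟨i + 1, hi⟩) (Φ f))) := by
  refine ⟨LinearEquiv.ofLinear (Stmt16Aux.psi hab hba α β) (Stmt16Aux.psi hba hab β α)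
    (LinearMap.ext fun f => Stmt16Aux.psi_psi hba hab β α f)
    (LinearMap.ext fun f => Stmt16Aux.psi_psi hab hba α β f), ?_, ?_⟩
  · intro i hi f
    simp only [LinearEquiv.ofLinear_apply]
    exact Stmt16Aux.psi_rT hab hba α β (sgen n i hi)
      (by rw [show (sgen n i hi).left = 1 from rfl]; exact Stmt16Aux.Fsgn_one) f
  · intro i hi f
    simp only [LinearEquiv.ofLinear_apply, map_smul, map_add]
    exact congrArg (fun z => (2⁻¹ : ℂ) • ((Stmt16Aux.psi hab hba α β) f + z))
      (Stmt16Aux.psi_rT hab hba α β _ (Stmt16Aux.Fsgn_tt _ _) f)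
end
end

section
/- Let n = 2m with m ≥ 1 and let α be a representation of S_m on a nonzero ℂ-vector space V. Let M = Ind_{W_{(m,m)}}^{W_n}(α ⊗ εα) be the induced W_n-representation, realized as the space of functions f: W_n → V ⊗ V satisfying f(hg) = (α ⊗ εα)(h)·f(g) for all h ∈ W_{(m,m)}, g ∈ W_n, with action (g·f)(x) = f(xg). Then M decomposes as an internal direct sum M = M⁺ ⊕ M⁻ of two nonzero ℂ-subspaces, each of which is stable under the action of every s_i and of every e_i := ½(1 + t_it_{i+1}); i.e. M is reducible as an ℰ_n(1)-module. -/
noncomputable section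
set_option maxRecDepth 4000

open TensorProduct

namespace Stmt17Aux

open SemidirectProduct TensorProduct

lemma negOne_pow_mod (k : ℕ) : ((-1 : ℂ)) ^ (k % 2) = (-1) ^ k := by
  conv_rhs => rw [← Nat.div_add_mod k 2]
  rw [pow_add, pow_mul]
  norm_num

lemma negOne_pow_val_add (a b : ZMod 2) :
    ((-1 : ℂ)) ^ ((a + b).val) = (-1) ^ a.val * (-1) ^ b.val := by
  rw [ZMod.val_add, negOne_pow_mod, pow_add]

lemma negOne_pow_sq (k : ℕ) : ((-1 : ℂ)) ^ k * (-1) ^ k = 1 := by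
  rw [← mul_pow]; norm_num

/-- The total sign character of `W n`. -/
def chi {n : ℕ} (x : W n) : ℂ :=
  (-1) ^ (∑ j, (Multiplicative.toAdd (x.left j)).val)

lemma permAct_apply {n : ℕ} (σ : Equiv.Perm (Fin n)) (d : C2n n) (i : Fin n) :
    (permAct n σ) d i = d (σ⁻¹ i) := rfl

lemma chi_mul {n : ℕ} (x y : W n) : chi (x * y) = chi x * chi y := by
  unfold chi
  calc (-1:ℂ)^(∑ j, (Multiplicative.toAdd ((x*y).left j)).val)
      = ∏ j, (-1:ℂ)^((Multiplicative.toAdd ((x*y).left j)).val) :=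
        (Finset.prod_pow_eq_pow_sum _ _ _).symm
    _ = ∏ j, ((-1:ℂ)^((Multiplicative.toAdd (x.left j)).val) *
          (-1)^((Multiplicative.toAdd (y.left (x.right⁻¹ j))).val)) := by
        refine Finset.prod_congr rfl fun j _ => ?_
        have h1 : (x*y).left j = x.left j * y.left (x.right⁻¹ j) := rfl
        rw [h1, toAdd_mul, negOne_pow_val_add]
    _ = (∏ j, (-1:ℂ)^((Multiplicative.toAdd (x.left j)).val)) *
          ∏ j, (-1:ℂ)^((Multiplicative.toAdd (y.left (x.right⁻¹ j))).val) :=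
        Finset.prod_mul_distrib
    _ = _ := by
        rw [Equiv.prod_comp x.right⁻¹
          (fun j => (-1:ℂ)^((Multiplicative.toAdd (y.left j)).val)),
          Finset.prod_pow_eq_pow_sum, Finset.prod_pow_eq_pow_sum]

lemma chi_sq {n : ℕ} (x : W n) : chi x * chi x = 1 := negOne_pow_sq _

lemma chi_inr {n : ℕ} (σ : Equiv.Perm (Fin n)) : chi (inr σ : W n) = 1 := by
  simp [chi, SemidirectProduct.left_inr]

lemma chi_one {n : ℕ} : chi (1 : W n) = 1 := by
  simp [chi, SemidirectProduct.one_left]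

lemma chi_tgen {n : ℕ} (i : Fin n) : chi (tgen n i) = -1 := by
  unfold chi tgen
  rw [show (∑ j, (Multiplicative.toAdd
      ((inl (fun j => if j = i then Multiplicative.ofAdd 1 else 1 :
        C2n n) : W n).left j)).val) = 1 from ?_]
  · norm_num
  · have h1 : ∀ j : Fin n, (Multiplicative.toAdd
        ((inl (fun j => if j = i then Multiplicative.ofAdd 1 else 1 : C2n n) :
          W n).left j)).val = if j = i then 1 else 0 := by
      intro j
      rw [SemidirectProduct.left_inl]
      by_cases hj : j = i <;> simp [hj]
      rfl
    rw [Finset.sum_congr rfl fun j _ => h1 j, Finset.sum_ite_eq' Finset.univ i (fun _ => 1)]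
    simp

lemma chi_left_eq {n : ℕ} (x y : W n) (hxy : x.left = y.left) : chi x = chi y := by
  unfold chi; rw [hxy]

lemma bsign_mul {a b n : ℕ} (h : a + b = n) (c d : C2n n) :
    bsign h (c * d) = bsign h c * bsign h d := by
  unfold bsign
  rw [← Finset.prod_pow_eq_pow_sum, ← Finset.prod_pow_eq_pow_sum, ← Finset.prod_pow_eq_pow_sum,
    ← Finset.prod_mul_distrib]
  refine Finset.prod_congr rfl fun j _ => ?_
  have h1 : (c * d) (bEquiv h (Sum.inr j)) =
      c (bEquiv h (Sum.inr j)) * d (bEquiv h (Sum.inr j)) := rfl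
  rw [h1, toAdd_mul, negOne_pow_val_add]

lemma bsign_sq {a b n : ℕ} (h : a + b = n) (c : C2n n) : bsign h c * bsign h c = 1 :=
  negOne_pow_sq _

lemma bsign_one {a b n : ℕ} (h : a + b = n) : bsign h (1 : C2n n) = 1 := by
  simp [bsign]

end Stmt17Aux


namespace Stmt17Aux

open SemidirectProduct TensorProduct

variable {m : ℕ}

/-- The block-diagonal permutation. -/
def perm2 (h2 : m + m = 2 * m) (σ₁ σ₂ : Equiv.Perm (Fin m)) : Equiv.Perm (Fin (2 * m)) :=
  (bEquiv h2).permCongr (σ₁.sumCongr σ₂)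

lemma perm2_apply_inl (h2 : m + m = 2 * m) (σ₁ σ₂ : Equiv.Perm (Fin m)) (i : Fin m) :
    perm2 h2 σ₁ σ₂ (bEquiv h2 (Sum.inl i)) = bEquiv h2 (Sum.inl (σ₁ i)) := by
  simp [perm2]

lemma perm2_apply_inr (h2 : m + m = 2 * m) (σ₁ σ₂ : Equiv.Perm (Fin m)) (i : Fin m) :
    perm2 h2 σ₁ σ₂ (bEquiv h2 (Sum.inr i)) = bEquiv h2 (Sum.inr (σ₂ i)) := by
  simp [perm2]

lemma perm2_mul (h2 : m + m = 2 * m) (σ₁ σ₂ τ₁ τ₂ : Equiv.Perm (Fin m)) :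
    perm2 h2 σ₁ σ₂ * perm2 h2 τ₁ τ₂ = perm2 h2 (σ₁ * τ₁) (σ₂ * τ₂) := by
  apply Equiv.ext; intro x
  obtain ⟨y, rfl⟩ := (bEquiv h2).surjective x
  cases y with
  | inl i => simp [Equiv.Perm.mul_apply, perm2_apply_inl]
  | inr i => simp [Equiv.Perm.mul_apply, perm2_apply_inr]

lemma perm2_one (h2 : m + m = 2 * m) : perm2 h2 1 1 = 1 := by
  apply Equiv.ext; intro x
  obtain ⟨y, rfl⟩ := (bEquiv h2).surjective x
  cases y with
  | inl i => simp [perm2_apply_inl]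
  | inr i => simp [perm2_apply_inr]

lemma perm2_inv (h2 : m + m = 2 * m) (σ₁ σ₂ : Equiv.Perm (Fin m)) :
    (perm2 h2 σ₁ σ₂)⁻¹ = perm2 h2 σ₁⁻¹ σ₂⁻¹ := by
  apply inv_eq_of_mul_eq_one_right
  rw [perm2_mul]
  simp [perm2_one]

lemma perm2_inj (h2 : m + m = 2 * m) {σ₁ σ₂ τ₁ τ₂ : Equiv.Perm (Fin m)}
    (h : perm2 h2 σ₁ σ₂ = perm2 h2 τ₁ τ₂) : σ₁ = τ₁ ∧ σ₂ = τ₂ := by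
  constructor
  · ext i
    have h1 := congrArg (fun p => p (bEquiv h2 (Sum.inl i))) h
    simp only [perm2_apply_inl] at h1
    have := (bEquiv h2).injective h1
    exact congrArg Fin.val (Sum.inl_injective this)
  · ext i
    have h1 := congrArg (fun p => p (bEquiv h2 (Sum.inr i))) h
    simp only [perm2_apply_inr] at h1
    have := (bEquiv h2).injective h1
    exact congrArg Fin.val (Sum.inr_injective this)

/-- The block-swap permutation. -/
def wperm (h2 : m + m = 2 * m) : Equiv.Perm (Fin (2 * m)) :=
  (bEquiv h2).permCongr (Equiv.sumComm (Fin m) (Fin m))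

lemma wperm_apply_inl (h2 : m + m = 2 * m) (i : Fin m) :
    wperm h2 (bEquiv h2 (Sum.inl i)) = bEquiv h2 (Sum.inr i) := by
  simp [wperm]

lemma wperm_apply_inr (h2 : m + m = 2 * m) (i : Fin m) :
    wperm h2 (bEquiv h2 (Sum.inr i)) = bEquiv h2 (Sum.inl i) := by
  simp [wperm]

lemma wperm_mul_self (h2 : m + m = 2 * m) : wperm h2 * wperm h2 = 1 := by
  apply Equiv.ext; intro x
  obtain ⟨y, rfl⟩ := (bEquiv h2).surjective x
  cases y with
  | inl i => simp [Equiv.Perm.mul_apply, wperm_apply_inl, wperm_apply_inr]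
  | inr i => simp [Equiv.Perm.mul_apply, wperm_apply_inl, wperm_apply_inr]

lemma wperm_inv (h2 : m + m = 2 * m) : (wperm h2)⁻¹ = wperm h2 :=
  inv_eq_of_mul_eq_one_right (wperm_mul_self h2)

lemma wperm_mul_perm2 (h2 : m + m = 2 * m) (σ₁ σ₂ : Equiv.Perm (Fin m)) :
    wperm h2 * perm2 h2 σ₁ σ₂ = perm2 h2 σ₂ σ₁ * wperm h2 := by
  apply Equiv.ext; intro x
  obtain ⟨y, rfl⟩ := (bEquiv h2).surjective x
  cases y with
  | inl i =>
      simp [Equiv.Perm.mul_apply, perm2_apply_inl, perm2_apply_inr,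
        wperm_apply_inl, wperm_apply_inr]
  | inr i =>
      simp [Equiv.Perm.mul_apply, perm2_apply_inl, perm2_apply_inr,
        wperm_apply_inl, wperm_apply_inr]

/-- The block-swap element `τ` of `W_{2m}`. -/
def tauW (h2 : m + m = 2 * m) : W (2 * m) := inr (wperm h2)

lemma tau_mul_tau (h2 : m + m = 2 * m) : tauW h2 * tauW h2 = 1 := by
  rw [tauW, ← map_mul, wperm_mul_self, map_one]

lemma chi_tau (h2 : m + m = 2 * m) : chi (tauW h2) = 1 := chi_inr _

lemma blockElem_left {a b n : ℕ} (h : a + b = n) (c : C2n n)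
    (σ₁ : Equiv.Perm (Fin a)) (σ₂ : Equiv.Perm (Fin b)) :
    (blockElem h c σ₁ σ₂).left = c := by
  simp [blockElem, SemidirectProduct.mul_left]

lemma blockElem_right (h2 : m + m = 2 * m) (c : C2n (2 * m)) (σ₁ σ₂ : Equiv.Perm (Fin m)) :
    (blockElem h2 c σ₁ σ₂).right = perm2 h2 σ₁ σ₂ := by
  simp [blockElem, perm2, SemidirectProduct.mul_right]

lemma chi_blockElem (h2 : m + m = 2 * m) (c : C2n (2 * m)) (σ₁ σ₂ : Equiv.Perm (Fin m)) :
    chi (blockElem h2 c σ₁ σ₂) = chi (inl c : W (2 * m)) :=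
  chi_left_eq _ _ (by rw [blockElem_left, SemidirectProduct.left_inl])

lemma tau_mul_blockElem (h2 : m + m = 2 * m) (c : C2n (2 * m)) (σ₁ σ₂ : Equiv.Perm (Fin m)) :
    tauW h2 * blockElem h2 c σ₁ σ₂ =
      blockElem h2 ((permAct (2 * m) (wperm h2)) c) σ₂ σ₁ * tauW h2 := by
  apply SemidirectProduct.ext
  · simp [tauW, blockElem, SemidirectProduct.mul_left]
  · simp only [tauW, blockElem, SemidirectProduct.mul_right, SemidirectProduct.right_inl,
      SemidirectProduct.right_inr, one_mul, mul_one]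
    exact wperm_mul_perm2 h2 σ₁ σ₂

lemma bsign_permAct (h2 : m + m = 2 * m) (σ₁ σ₂ : Equiv.Perm (Fin m)) (d : C2n (2 * m)) :
    bsign h2 ((permAct (2 * m) (perm2 h2 σ₁ σ₂)) d) = bsign h2 d := by
  unfold bsign
  congr 1
  have h1 : ∀ j : Fin m, (permAct (2 * m) (perm2 h2 σ₁ σ₂)) d (bEquiv h2 (Sum.inr j)) =
      d (bEquiv h2 (Sum.inr (σ₂⁻¹ j))) := by
    intro j
    rw [permAct_apply, perm2_inv, perm2_apply_inr]
  rw [Finset.sum_congr rfl fun j _ => by rw [h1 j]]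
  exact Fintype.sum_equiv σ₂⁻¹ _ _ (fun j => rfl)

lemma bsign_wperm_mul (h2 : m + m = 2 * m) (c : C2n (2 * m)) :
    bsign h2 ((permAct (2 * m) (wperm h2)) c) * bsign h2 c = chi (inl c : W (2 * m)) := by
  unfold bsign chi
  rw [← pow_add]
  congr 1
  have h1 : ∀ j : Fin m, (permAct (2 * m) (wperm h2)) c (bEquiv h2 (Sum.inr j)) =
      c (bEquiv h2 (Sum.inl j)) := by
    intro j
    rw [permAct_apply, wperm_inv, wperm_apply_inr]
  rw [Finset.sum_congr rfl fun j _ => by rw [h1 j]]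
  have h2' : (∑ j, (Multiplicative.toAdd ((inl c : W (2*m)).left j)).val) =
      ∑ y : Fin m ⊕ Fin m, (Multiplicative.toAdd (c (bEquiv h2 y))).val := by
    rw [SemidirectProduct.left_inl]
    exact (Fintype.sum_equiv (bEquiv h2) _ _ (fun y => rfl)).symm
  rw [h2', Fintype.sum_sum_type]

lemma bsign_wperm (h2 : m + m = 2 * m) (c : C2n (2 * m)) :
    bsign h2 ((permAct (2 * m) (wperm h2)) c) = chi (inl c : W (2 * m)) * bsign h2 c := by
  have hs := bsign_sq h2 c
  rw [← mul_one (bsign h2 ((permAct (2 * m) (wperm h2)) c)), ← hs, ← mul_assoc,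
    bsign_wperm_mul]

end Stmt17Aux


namespace Stmt17Aux

open SemidirectProduct TensorProduct

variable {m : ℕ}

section CommOp

variable {V : Type} [AddCommGroup V] [Module ℂ V]

lemma comm_comm (z : V ⊗[ℂ] V) :
    TensorProduct.comm ℂ V V (TensorProduct.comm ℂ V V z) = z := by
  induction z using TensorProduct.induction_on with
  | zero => simp
  | tmul x y => simp
  | add x y hx hy => simp [map_add, hx, hy]

lemma comm_map (f g : V →ₗ[ℂ] V) (z : V ⊗[ℂ] V) :
    TensorProduct.comm ℂ V V (TensorProduct.map f g z) =
      TensorProduct.map g f (TensorProduct.comm ℂ V V z) := by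
  induction z using TensorProduct.induction_on with
  | zero => simp
  | tmul x y => simp
  | add x y hx hy => simp [map_add, hx, hy]

variable (α : Representation ℂ (Equiv.Perm (Fin m)) V)

/-- The intertwining involution on the induced module. -/
def TI (h2 : m + m = 2 * m) : ↥(Ind h2 α α) →ₗ[ℂ] ↥(Ind h2 α α) where
  toFun f := ⟨fun x => chi x • (TensorProduct.comm ℂ V V) (f.1 (tauW h2 * x)), by
    intro c σ₁ σ₂ g
    have hmem := f.2 ((permAct (2 * m) (wperm h2)) c) σ₂ σ₁ (tauW h2 * g)
    have hx : tauW h2 * (blockElem h2 c σ₁ σ₂ * g)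
        = blockElem h2 ((permAct (2 * m) (wperm h2)) c) σ₂ σ₁ * (tauW h2 * g) := by
      rw [← mul_assoc, tau_mul_blockElem, mul_assoc]
    show chi (blockElem h2 c σ₁ σ₂ * g) •
        (TensorProduct.comm ℂ V V) (f.1 (tauW h2 * (blockElem h2 c σ₁ σ₂ * g))) =
      bsign h2 c • TensorProduct.map (α σ₁) (α σ₂)
        (chi g • (TensorProduct.comm ℂ V V) (f.1 (tauW h2 * g)))
    rw [hx, hmem, chi_mul, chi_blockElem, map_smul, comm_map, bsign_wperm, map_smul,
      smul_smul, smul_smul]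
    congr 1
    have hc := chi_sq (inl c : W (2 * m))
    linear_combination (chi g * bsign h2 c) * hc⟩
  map_add' f g := by
    apply Subtype.ext
    funext x
    show chi x • (TensorProduct.comm ℂ V V) ((f.1 + g.1) (tauW h2 * x)) = _
    simp [smul_add]
  map_smul' r f := by
    apply Subtype.ext
    funext x
    show chi x • (TensorProduct.comm ℂ V V) ((r • f.1) (tauW h2 * x)) = _
    simp [smul_comm r (chi x)]

lemma TI_sq (h2 : m + m = 2 * m) (f : ↥(Ind h2 α α)) : TI α h2 (TI α h2 f) = f := by
  apply Subtype.ext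
  funext x
  show chi x • (TensorProduct.comm ℂ V V)
      (chi (tauW h2 * x) • (TensorProduct.comm ℂ V V) (f.1 (tauW h2 * (tauW h2 * x)))) = f.1 x
  rw [← mul_assoc, tau_mul_tau, one_mul, chi_mul, chi_tau, one_mul, map_smul, comm_comm,
    smul_smul, chi_sq, one_smul]

lemma TI_rT_comm (h2 : m + m = 2 * m) (w : W (2 * m)) (hw : chi w = 1) (f : ↥(Ind h2 α α)) :
    TI α h2 (rT h2 α α w f) = rT h2 α α w (TI α h2 f) := by
  apply Subtype.ext
  funext x
  show chi x • (TensorProduct.comm ℂ V V) (f.1 (tauW h2 * x * w)) =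
    chi (x * w) • (TensorProduct.comm ℂ V V) (f.1 (tauW h2 * (x * w)))
  rw [chi_mul, hw, mul_one, mul_assoc]

end CommOp

lemma chi_sgen {n : ℕ} (i : ℕ) (hi : i + 1 < n) : chi (sgen n i hi) = 1 := chi_inr _

lemma chi_tt {n : ℕ} (i j : Fin n) : chi (tgen n i * tgen n j) = 1 := by
  rw [chi_mul, chi_tgen, chi_tgen]
  norm_num

end Stmt17Aux


namespace Stmt17Aux

open SemidirectProduct TensorProduct

variable {m : ℕ} {V : Type} [AddCommGroup V] [Module ℂ V]

/-- The predicate that a permutation is block-diagonal. -/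
def blk (h2 : m + m = 2 * m) (π : Equiv.Perm (Fin (2 * m))) : Prop :=
  ∃ p : Equiv.Perm (Fin m) × Equiv.Perm (Fin m), π = perm2 h2 p.1 p.2

variable (α : Representation ℂ (Equiv.Perm (Fin m)) V)

open Classical in
/-- The element of the induced module supported on the subgroup `W_{(m,m)}`. -/
def f0 (h2 : m + m = 2 * m) (v : V) : W (2 * m) → V ⊗[ℂ] V := fun x =>
  if h : blk h2 x.right then
    bsign h2 x.left •
      TensorProduct.map (α (Classical.choose h).1) (α (Classical.choose h).2) (v ⊗ₜ v)
  else 0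

lemma f0_apply (h2 : m + m = 2 * m) (v : V) (x : W (2 * m)) (σ₁ σ₂ : Equiv.Perm (Fin m))
    (hx : x.right = perm2 h2 σ₁ σ₂) :
    f0 α h2 v x = bsign h2 x.left • TensorProduct.map (α σ₁) (α σ₂) (v ⊗ₜ v) := by
  have hb : blk h2 x.right := ⟨(σ₁, σ₂), hx⟩
  rw [f0, dif_pos hb]
  obtain ⟨e1, e2⟩ := perm2_inj h2 ((Classical.choose_spec hb).symm.trans hx)
  rw [e1, e2]

lemma f0_zero (h2 : m + m = 2 * m) (v : V) (x : W (2 * m)) (hx : ¬ blk h2 x.right) :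
    f0 α h2 v x = 0 := by
  rw [f0, dif_neg hx]

lemma f0_mem (h2 : m + m = 2 * m) (v : V) : f0 α h2 v ∈ Ind h2 α α := by
  intro c σ₁ σ₂ g
  by_cases hb : blk h2 g.right
  · obtain ⟨⟨p1, p2⟩, hp⟩ := hb
    have hleft : (blockElem h2 c σ₁ σ₂ * g).left =
        c * (permAct (2 * m) (perm2 h2 σ₁ σ₂)) g.left := by
      rw [SemidirectProduct.mul_left, blockElem_left, blockElem_right]
    have hright : (blockElem h2 c σ₁ σ₂ * g).right = perm2 h2 (σ₁ * p1) (σ₂ * p2) := by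
      rw [SemidirectProduct.mul_right, blockElem_right, hp, perm2_mul]
    rw [f0_apply α h2 v _ _ _ hright, f0_apply α h2 v g p1 p2 hp, hleft,
      bsign_mul, bsign_permAct, map_mul, map_mul, Module.End.mul_eq_comp,
      Module.End.mul_eq_comp, TensorProduct.map_comp, LinearMap.comp_apply,
      map_smul, mul_smul]
  · have hnb : ¬ blk h2 (blockElem h2 c σ₁ σ₂ * g).right := by
      rintro ⟨⟨q1, q2⟩, hq⟩
      apply hb
      refine ⟨(σ₁⁻¹ * q1, σ₂⁻¹ * q2), ?_⟩
      have hr : (blockElem h2 c σ₁ σ₂ * g).right = perm2 h2 σ₁ σ₂ * g.right := by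
        rw [SemidirectProduct.mul_right, blockElem_right]
      rw [hr] at hq
      calc g.right = (perm2 h2 σ₁ σ₂)⁻¹ * (perm2 h2 σ₁ σ₂ * g.right) := by group
        _ = (perm2 h2 σ₁ σ₂)⁻¹ * perm2 h2 q1 q2 := by rw [hq]
        _ = perm2 h2 (σ₁⁻¹ * q1) (σ₂⁻¹ * q2) := by rw [perm2_inv, perm2_mul]
    rw [f0_zero α h2 v _ hnb, f0_zero α h2 v _ hb, map_zero, smul_zero]

lemma f0_one (h2 : m + m = 2 * m) (v : V) : f0 α h2 v 1 = v ⊗ₜ v := by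
  rw [f0_apply α h2 v 1 1 1 (by rw [SemidirectProduct.one_right, perm2_one]),
    SemidirectProduct.one_left, bsign_one, one_smul]
  simp

lemma f0_tau (h2 : m + m = 2 * m) (hm : 1 ≤ m) (v : V) : f0 α h2 v (tauW h2) = 0 := by
  apply f0_zero
  rw [tauW, SemidirectProduct.right_inr]
  rintro ⟨⟨p, q⟩, hpq⟩
  have h1 := congrArg (fun p' => p' (bEquiv h2 (Sum.inl ⟨0, hm⟩))) hpq
  simp only [wperm_apply_inl, perm2_apply_inl] at h1
  have h2' := (bEquiv h2).injective h1
  simp at h2'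

lemma tmul_self_ne_zero (v : V) (hv : v ≠ 0) : (v ⊗ₜ[ℂ] v : V ⊗[ℂ] V) ≠ 0 := by
  have hd : ¬ ∀ φ : Module.Dual ℂ V, φ v = 0 := by
    rw [Module.forall_dual_apply_eq_zero_iff]; exact hv
  push_neg at hd
  obtain ⟨φ, hφ⟩ := hd
  intro h0
  have h1 := congrArg (fun z => TensorProduct.lid ℂ ℂ (TensorProduct.map φ φ z)) h0
  simp only [TensorProduct.map_tmul, TensorProduct.lid_tmul, smul_eq_mul, map_zero] at h1
  exact hφ (mul_self_eq_zero.mp h1)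

end Stmt17Aux


/-- For `n = 2m` and a representation `α` of `S_m` on a nonzero space `V`, the
induced module `M = Ind_{W_{(m,m)}}^{W_n}(α ⊗ εα)` decomposes as an internal
direct sum `M = M⁺ ⊕ M⁻` of two nonzero subspaces, each stable under the action
of every `s_i` and every `e_i = ½(1 + t_i t_{i+1})`; i.e. `M` is reducible as an
`ℰ_n(1)`-module. -/
theorem stmt17 (m : ℕ) (hm : 1 ≤ m) (hmm : m + m = 2 * m)
    {V : Type} [AddCommGroup V] [Module ℂ V] [Nontrivial V]
    (α : Representation ℂ (Equiv.Perm (Fin m)) V) :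
    ∃ P Q : Submodule ℂ ↥(Ind hmm α α),
      P ≠ ⊥ ∧ Q ≠ ⊥ ∧ IsCompl P Q ∧
      (∀ (i : ℕ) (hi : i + 1 < 2 * m) (f : ↥(Ind hmm α α)),
        f ∈ P → rT hmm α α (sgen (2 * m) i hi) f ∈ P) ∧
      (∀ (i : ℕ) (hi : i + 1 < 2 * m) (f : ↥(Ind hmm α α)),
        f ∈ Q → rT hmm α α (sgen (2 * m) i hi) f ∈ Q) ∧
      (∀ (i : ℕ) (hi : i + 1 < 2 * m) (f : ↥(Ind hmm α α)),
        f ∈ P → (2⁻¹ : ℂ) •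
          (f + rT hmm α α
            (tgen (2 * m) ⟨i, by omega⟩ * tgen (2 * m) ⟨i + 1, hi⟩) f) ∈ P) ∧
      (∀ (i : ℕ) (hi : i + 1 < 2 * m) (f : ↥(Ind hmm α α)),
        f ∈ Q → (2⁻¹ : ℂ) •
          (f + rT hmm α α
            (tgen (2 * m) ⟨i, by omega⟩ * tgen (2 * m) ⟨i + 1, hi⟩) f) ∈ Q) := by
  classical
  obtain ⟨v, hv⟩ := exists_ne (0 : V)
  set T := Stmt17Aux.TI α hmm with hTdef
  have hT2 : ∀ f, T (T f) = f := Stmt17Aux.TI_sq α hmm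
  have hcomm : ∀ (w : W (2 * m)), Stmt17Aux.chi w = 1 → ∀ f,
      T (rT hmm α α w f) = rT hmm α α w (T f) := fun w hw f =>
    Stmt17Aux.TI_rT_comm α hmm w hw f
  set P := LinearMap.ker (T - LinearMap.id) with hPdef
  set Q := LinearMap.ker (T + LinearMap.id) with hQdef
  have hmemP : ∀ f, f ∈ P ↔ T f = f := by
    intro f
    rw [hPdef, LinearMap.mem_ker, LinearMap.sub_apply, LinearMap.id_apply, sub_eq_zero]
  have hmemQ : ∀ f, f ∈ Q ↔ T f = -f := by
    intro f
    rw [hQdef, LinearMap.mem_ker, LinearMap.add_apply, LinearMap.id_apply,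
      add_eq_zero_iff_eq_neg]
  set F : ↥(Ind hmm α α) := ⟨Stmt17Aux.f0 α hmm v, Stmt17Aux.f0_mem α hmm v⟩ with hFdef
  have hTF1 : (T F).1 1 = 0 := by
    show Stmt17Aux.chi (1 : W (2 * m)) •
      (TensorProduct.comm ℂ V V) (F.1 (Stmt17Aux.tauW hmm * 1)) = 0
    rw [mul_one, Stmt17Aux.chi_one, one_smul]
    show (TensorProduct.comm ℂ V V) (Stmt17Aux.f0 α hmm v (Stmt17Aux.tauW hmm)) = 0
    rw [Stmt17Aux.f0_tau α hmm hm v, map_zero]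
  have hF1 : F.1 1 = v ⊗ₜ v := Stmt17Aux.f0_one α hmm v
  have hvv : (v ⊗ₜ[ℂ] v : V ⊗[ℂ] V) ≠ 0 := Stmt17Aux.tmul_self_ne_zero v hv
  refine ⟨P, Q, ?_, ?_, ?_, ?_, ?_, ?_, ?_⟩
  · -- P ≠ ⊥
    rw [Submodule.ne_bot_iff]
    refine ⟨F + T F, ?_, ?_⟩
    · rw [hmemP, map_add, hT2, add_comm]
    · intro h0
      have h1 : F.1 1 + (T F).1 1 = 0 := congrArg (fun f => f.1 1) h0
      rw [hF1, hTF1, add_zero] at h1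
      exact hvv h1
  · -- Q ≠ ⊥
    rw [Submodule.ne_bot_iff]
    refine ⟨F - T F, ?_, ?_⟩
    · rw [hmemQ, map_sub, hT2, neg_sub]
    · intro h0
      have h1 : F.1 1 - (T F).1 1 = 0 := congrArg (fun f => f.1 1) h0
      rw [hF1, hTF1, sub_zero] at h1
      exact hvv h1
  · -- IsCompl
    constructor
    · rw [disjoint_iff_inf_le]
      intro f hf
      have hfP := (hmemP f).1 hf.1
      have hfQ := (hmemQ f).1 hf.2
      have h1 : f = -f := by rw [hfP] at hfQ; exact hfQ
      have h2 : (2 : ℂ) • f = 0 := by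
        rw [two_smul, add_eq_zero_iff_eq_neg]
        exact h1
      rcases smul_eq_zero.mp h2 with h | h
      · norm_num at h
      · simp [h]
    · rw [codisjoint_iff_le_sup]
      intro x _
      rw [Submodule.mem_sup]
      refine ⟨(2⁻¹ : ℂ) • (x + T x), ?_, (2⁻¹ : ℂ) • (x - T x), ?_, ?_⟩
      · rw [hmemP, map_smul, map_add, hT2, add_comm]
      · rw [hmemQ, map_smul, map_sub, hT2, smul_sub, smul_sub, neg_sub]
      · rw [← smul_add]
        have h3 : (x + T x) + (x - T x) = (2 : ℂ) • x := by
          rw [two_smul]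
          abel
        rw [h3, smul_smul]
        norm_num
  · -- P stable under s_i
    intro i hi f hf
    rw [hmemP] at hf ⊢
    rw [hcomm _ (Stmt17Aux.chi_sgen i hi) f, hf]
  · -- Q stable under s_i
    intro i hi f hf
    rw [hmemQ] at hf ⊢
    rw [hcomm _ (Stmt17Aux.chi_sgen i hi) f, hf, map_neg]
  · -- P stable under e_i
    intro i hi f hf
    have h2' : rT hmm α α (tgen (2 * m) ⟨i, by omega⟩ * tgen (2 * m) ⟨i + 1, hi⟩) f ∈ P := by
      rw [hmemP]
      rw [hcomm _ (Stmt17Aux.chi_tt _ _) f, (hmemP f).1 hf]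
    exact P.smul_mem _ (P.add_mem hf h2')
  · -- Q stable under e_i
    intro i hi f hf
    have h2' : rT hmm α α (tgen (2 * m) ⟨i, by omega⟩ * tgen (2 * m) ⟨i + 1, hi⟩) f ∈ Q := by
      rw [hmemQ]
      rw [hcomm _ (Stmt17Aux.chi_tt _ _) f, (hmemQ f).1 hf, map_neg]
    exact Q.smul_mem _ (Q.add_mem hf h2')
end
end
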